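/- arXiv:2304.00937 — 6 statements merged into one kernel-verified Lean document; each statement's English description precedes it below -/
import Mathlib

section
/- A graph G has a P_{≥2}-factor (a spanning subgraph each of whose components is a path with at least 2 vertices) if and only if for every vertex subset X of G, the number of isolated vertices of G−X is at most 2|X|. -/
open SimpleGraph

/-- Number of isolated vertices of a graph. -/
noncomputable def isolCount {V : Type*} (G : SimpleGraph V) : ℕ :=
  Nat.card {v : V // ∀ w, ¬ G.Adj v w}

/-- Number of connected components of a graph. -/
noncomputable def compCount {V : Type*} (G : SimpleGraph V) : ℕ :=
  Nat.card G.ConnectedComponent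

/-- Number of vertices of degree exactly one. -/
noncomputable def deg1Count {V : Type*} (G : SimpleGraph V) : ℕ :=
  Nat.card {v : V // Nat.card {w : V // G.Adj v w} = 1}

/-- A graph is factor-critical if deleting any vertex leaves a graph with a perfect matching. -/
def IsFactorCritical {V : Type*} (G : SimpleGraph V) : Prop :=
  ∀ v : V, ∃ M : (G.induce ({v}ᶜ : Set V)).Subgraph, M.IsPerfectMatching

/-- `G` is the corona of the factor-critical graph induced on `S` (with `3 ≤ |S|`):
every vertex outside `S` is a pendant vertex attached to its own vertex of `S`. -/
def IsCoronaOfFactorCritical {V : Type*} (G : SimpleGraph V) (S : Set V) : Prop :=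
  3 ≤ Nat.card S ∧ IsFactorCritical (G.induce S) ∧
  ∃ z : S ≃ ↥(Sᶜ), ∀ (y : S) (w : V), G.Adj ((z y : ↥(Sᶜ)) : V) w ↔ w = (y : V)

/-- A sun is `K₁`, `K₂`, or the corona of a factor-critical graph with at least 3 vertices. -/
def IsSunGraph {V : Type*} (G : SimpleGraph V) : Prop :=
  Nat.card V = 1 ∨ (Nat.card V = 2 ∧ G.Connected) ∨ ∃ S : Set V, IsCoronaOfFactorCritical G S

/-- The number of sun components of a graph. -/
noncomputable def sunCount {V : Type*} (G : SimpleGraph V) : ℕ :=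
  Nat.card {C : G.ConnectedComponent // IsSunGraph (G.induce C.supp)}

/-- `G` has a `P_{≥k}`-factor: a spanning subgraph all of whose components are paths
of order at least `k`. -/
def HasPathFactor {V : Type*} (G : SimpleGraph V) (k : ℕ) : Prop :=
  ∃ F : SimpleGraph V, F ≤ G ∧ ∀ C : F.ConnectedComponent,
    ∃ m : ℕ, k ≤ m ∧ Nonempty ((F.induce C.supp) ≃g pathGraph m)

/-- Vertex `k`-connectivity: more than `k` vertices, and removing fewer than `k`
vertices leaves a connected graph. -/
def IsKConnected {V : Type*} (G : SimpleGraph V) (k : ℕ) : Prop :=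
  k < Nat.card V ∧ ∀ S : Set V, Nat.card S < k → (G.induce (Sᶜ : Set V)).Connected

/-- The toughness of a graph, valued in `ℝ≥0∞` (infimum over the empty set is `∞`,
which covers complete graphs). -/
noncomputable def toughness {V : Type*} (G : SimpleGraph V) : ENNReal :=
  ⨅ X : {X : Set V // 2 ≤ compCount (G.induce (Xᶜ : Set V))},
    (Nat.card X.1 : ENNReal) / (compCount (G.induce ((X.1)ᶜ : Set V)) : ENNReal)

/-- The isolated toughness of a graph, valued in `ℝ≥0∞`. -/
noncomputable def isolatedToughness {V : Type*} (G : SimpleGraph V) : ENNReal :=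
  ⨅ X : {X : Set V // 2 ≤ isolCount (G.induce (Xᶜ : Set V))},
    (Nat.card X.1 : ENNReal) / (isolCount (G.induce ((X.1)ᶜ : Set V)) : ENNReal)

/-- `G` is `(P_{≥k}, n)`-factor critical avoidable: for every vertex set `W` of size `n`
and every edge `e` of `G − W`, the graph `G − W − e` has a `P_{≥k}`-factor. -/
def PathFactorCriticalAvoidable {V : Type*} (G : SimpleGraph V) (k n : ℕ) : Prop :=
  ∀ W : Set V, Nat.card W = n → ∀ e ∈ (G.induce (Wᶜ : Set V)).edgeSet,
    HasPathFactor ((G.induce (Wᶜ : Set V)).deleteEdges {e}) k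

/-- The join of two graphs: all edges between the two sides. -/
def graphJoin {α β : Type*} (G : SimpleGraph α) (H : SimpleGraph β) :
    SimpleGraph (α ⊕ β) where
  Adj x y :=
    match x, y with
    | Sum.inl a, Sum.inl b => G.Adj a b
    | Sum.inr a, Sum.inr b => H.Adj a b
    | _, _ => True
  symm := ⟨by rintro (a|a) (b|b) h <;> simp_all <;> exact h.symm⟩
  loopless := ⟨by rintro (a|a) h <;> simp_all⟩

/-- The disjoint union of two graphs. -/
def disjUnion {α β : Type*} (G : SimpleGraph α) (H : SimpleGraph β) :
    SimpleGraph (α ⊕ β) where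
  Adj x y :=
    match x, y with
    | Sum.inl a, Sum.inl b => G.Adj a b
    | Sum.inr a, Sum.inr b => H.Adj a b
    | _, _ => False
  symm := ⟨by rintro (a|a) (b|b) h <;> simp_all <;> exact h.symm⟩
  loopless := ⟨by rintro (a|a) h <;> simp_all⟩

/-- `b` disjoint copies of `K₂`. -/
def copiesK2 (b : ℕ) : SimpleGraph (Fin b × Fin 2) where
  Adj x y := x.1 = y.1 ∧ x.2 ≠ y.2
  symm := ⟨by rintro x y ⟨h1, h2⟩; exact ⟨h1.symm, h2.symm⟩⟩
  loopless := ⟨by rintro x ⟨h1, h2⟩; exact h2 rfl⟩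

namespace LVAux

open Finset

variable {V : Type*} {G : SimpleGraph V} {R : Finset V} {L : List (List V)}

open scoped Classical in
noncomputable def isoSet (G : SimpleGraph V) (R X : Finset V) : Finset V :=
  R.filter (fun v => v ∉ X ∧ ∀ w ∈ R, w ∉ X → ¬ G.Adj v w)

lemma mem_isoSet {G : SimpleGraph V} {R X : Finset V} {v : V} :
    v ∈ isoSet G R X ↔ v ∈ R ∧ v ∉ X ∧ ∀ w ∈ R, w ∉ X → ¬ G.Adj v w := by
  classical
  simp [isoSet]

def Cond (G : SimpleGraph V) (R : Finset V) : Prop :=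
  ∀ X ⊆ R, (isoSet G R X).card ≤ 2 * X.card

def IsSys (G : SimpleGraph V) (R : Finset V) (L : List (List V)) : Prop :=
  (∀ p ∈ L, p.Chain' G.Adj ∧ 2 ≤ p.length) ∧ L.flatten.Nodup ∧
    (∀ v, v ∈ L.flatten ↔ v ∈ R)

open scoped Classical in
noncomputable def nbrs (G : SimpleGraph V) (R : Finset V) (v : V) : Finset V :=
  R.filter (fun w => G.Adj v w)

lemma mem_nbrs {G : SimpleGraph V} {R : Finset V} {v w : V} :
    w ∈ nbrs G R v ↔ w ∈ R ∧ G.Adj v w := by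
  classical
  simp [nbrs]

def ends (M : List (V × V)) : List V := M.flatMap (fun e => [e.1, e.2])

lemma mem_ends {M : List (V × V)} {v : V} :
    v ∈ ends M ↔ ∃ e ∈ M, v = e.1 ∨ v = e.2 := by
  simp [ends, List.mem_flatMap]

lemma exists_maximal_matching (G : SimpleGraph V) (R : Finset V) :
    ∃ M : List (V × V),
      (∀ e ∈ M, G.Adj e.1 e.2 ∧ e.1 ∈ R ∧ e.2 ∈ R) ∧ (ends M).Nodup ∧
      (∀ a ∈ R, a ∉ ends M → ∀ b ∈ R, b ∉ ends M → ¬ G.Adj a b) := by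
  classical
  obtain ⟨n, hn⟩ : ∃ n, R.card = n := ⟨_, rfl⟩
  induction n using Nat.strong_induction_on generalizing R with
  | _ n ih =>
  by_cases h : ∃ a ∈ R, ∃ b ∈ R, G.Adj a b
  · obtain ⟨a, ha, b, hb, hab⟩ := h
    have hne : a ≠ b := hab.ne
    set R' := R \ {a, b} with hR'
    have hcard : R'.card < n := by
      rw [← hn]
      refine Finset.card_lt_card ?_
      rw [Finset.ssubset_iff_of_subset (Finset.sdiff_subset)]
      exact ⟨a, ha, by simp [hR']⟩
    obtain ⟨M', hM'1, hM'2, hM'3⟩ := ih R'.card hcard R' rfl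
    have hendsR' : ∀ v ∈ ends M', v ∈ R' := by
      intro v hv
      rw [mem_ends] at hv
      obtain ⟨e, he, hv⟩ := hv
      rcases hv with rfl | rfl
      · exact (hM'1 e he).2.1
      · exact (hM'1 e he).2.2
    refine ⟨(a, b) :: M', ?_, ?_, ?_⟩
    · intro e he
      rcases List.mem_cons.mp he with rfl | he
      · exact ⟨hab, ha, hb⟩
      · have := hM'1 e he
        exact ⟨this.1, Finset.sdiff_subset this.2.1,
          Finset.sdiff_subset this.2.2⟩
    · have : ends ((a, b) :: M') = a :: b :: ends M' := rfl
      rw [this]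
      refine List.nodup_cons.mpr ⟨?_, List.nodup_cons.mpr ⟨?_, hM'2⟩⟩
      · intro hmem
        rcases List.mem_cons.mp hmem with h | h
        · exact hne h
        · have := hendsR' a h
          simp [hR'] at this
      · intro hmem
        have := hendsR' b hmem
        simp [hR'] at this
    · intro c hc hcnm d hd hdnm
      have hc' : c ∈ R' := by
        simp only [hR', Finset.mem_sdiff, Finset.mem_insert, Finset.mem_singleton]
        refine ⟨hc, fun hcd => hcnm ?_⟩
        rcases hcd with rfl | rfl
        · exact List.mem_cons_self
        · exact List.mem_cons.mpr (Or.inr (List.mem_cons_self))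
      have hd' : d ∈ R' := by
        simp only [hR', Finset.mem_sdiff, Finset.mem_insert, Finset.mem_singleton]
        refine ⟨hd, fun hcd => hdnm ?_⟩
        rcases hcd with rfl | rfl
        · exact List.mem_cons_self
        · exact List.mem_cons.mpr (Or.inr (List.mem_cons_self))
      refine hM'3 c hc' (fun hm => hcnm ?_) d hd' (fun hm => hdnm ?_)
      · exact List.mem_cons.mpr (Or.inr (List.mem_cons.mpr (Or.inr hm)))
      · exact List.mem_cons.mpr (Or.inr (List.mem_cons.mpr (Or.inr hm)))
  · push_neg at h
    exact ⟨[], by simp, by simp [ends], fun a ha _ b hb _ => h a ha b hb⟩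


lemma chain_pend2 {G : SimpleGraph V} {a b : V} {o1 o2 : Option V} (hab : G.Adj a b)
    (h1 : ∀ v ∈ o1, G.Adj v a) (h2 : ∀ v ∈ o2, G.Adj b v) :
    (o1.toList ++ [a, b] ++ o2.toList).Chain' G.Adj := by
  cases o1 <;> cases o2 <;>
    simp_all [List.Chain', List.isChain_cons_cons, List.isChain_singleton, Option.mem_def]

lemma chain_pend3 {G : SimpleGraph V} {a b c : V} {o1 o2 : Option V}
    (hab : G.Adj a b) (hbc : G.Adj b c)
    (h1 : ∀ v ∈ o1, G.Adj v a) (h2 : ∀ v ∈ o2, G.Adj c v) :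
    (o1.toList ++ [a, b, c] ++ o2.toList).Chain' G.Adj := by
  cases o1 <;> cases o2 <;>
    simp_all [List.Chain', List.isChain_cons_cons, List.isChain_singleton, Option.mem_def]

lemma nodup_pend2 {a b : V} {o1 o2 : Option V} (hne : a ≠ b)
    (h1 : ∀ v ∈ o1, v ≠ a ∧ v ≠ b) (h2 : ∀ v ∈ o2, v ≠ a ∧ v ≠ b)
    (h12 : ∀ v ∈ o1, ∀ w ∈ o2, v ≠ w) :
    (o1.toList ++ [a, b] ++ o2.toList).Nodup := by
  cases o1 <;> cases o2 <;>
    simp_all [List.nodup_cons, Option.mem_def] <;> tauto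

lemma nodup_pend3 {a b c : V} {o1 o2 : Option V} (hab : a ≠ b) (hac : a ≠ c) (hbc : b ≠ c)
    (h1 : ∀ v ∈ o1, v ≠ a ∧ v ≠ b ∧ v ≠ c) (h2 : ∀ v ∈ o2, v ≠ a ∧ v ≠ b ∧ v ≠ c)
    (h12 : ∀ v ∈ o1, ∀ w ∈ o2, v ≠ w) :
    (o1.toList ++ [a, b, c] ++ o2.toList).Nodup := by
  cases o1 <;> cases o2 <;>
    simp_all [List.nodup_cons, Option.mem_def] <;> tauto

lemma mem_pend2 {v a b : V} {o1 o2 : Option V} :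
    v ∈ (o1.toList ++ [a, b] ++ o2.toList) ↔ v ∈ o1 ∨ v = a ∨ v = b ∨ v ∈ o2 := by
  cases o1 <;> cases o2 <;> simp [Option.mem_def] <;> tauto

lemma mem_pend3 {v a b c : V} {o1 o2 : Option V} :
    v ∈ (o1.toList ++ [a, b, c] ++ o2.toList) ↔
      v ∈ o1 ∨ v = a ∨ v = b ∨ v = c ∨ v ∈ o2 := by
  cases o1 <;> cases o2 <;> simp [Option.mem_def] <;> tauto

lemma ends_pairwise {M : List (V × V)} (h : (ends M).Nodup) :
    M.Pairwise (fun e e' => e.1 ≠ e'.1 ∧ e.1 ≠ e'.2 ∧ e.2 ≠ e'.1 ∧ e.2 ≠ e'.2) := by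
  induction M with
  | nil => exact List.Pairwise.nil
  | cons e tl ih =>
      have hends : ends (e :: tl) = e.1 :: e.2 :: ends tl := rfl
      rw [hends, List.nodup_cons, List.nodup_cons] at h
      refine List.pairwise_cons.mpr ⟨?_, ih h.2.2⟩
      intro e' he'
      have h1 : e.1 ∉ ends tl := fun hm => h.1 (List.mem_cons.mpr (Or.inr hm))
      have h2 : e.2 ∉ ends tl := h.2.1
      refine ⟨?_, ?_, ?_, ?_⟩ <;> intro hEq
      · exact h1 (mem_ends.mpr ⟨e', he', Or.inl hEq⟩)
      · exact h1 (mem_ends.mpr ⟨e', he', Or.inr hEq⟩)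
      · exact h2 (mem_ends.mpr ⟨e', he', Or.inl hEq⟩)
      · exact h2 (mem_ends.mpr ⟨e', he', Or.inr hEq⟩)

lemma core [Fintype V] (G : SimpleGraph V) :
    ∀ (n : ℕ) (R : Finset V), R.card = n → Cond G R → ∃ L, IsSys G R L := by
  classical
  intro n
  induction n using Nat.strong_induction_on with
  | _ n ih =>
  intro R hn hcond
  have hniso : ∀ v ∈ R, ∃ w ∈ R, G.Adj v w := by
    intro v hv
    by_contra hcon
    push_neg at hcon
    have h0 : (isoSet G R ∅).card ≤ 0 := by simpa using hcond ∅ (Finset.empty_subset R)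
    have : v ∈ isoSet G R ∅ := mem_isoSet.mpr
      ⟨hv, Finset.notMem_empty v, fun w hw _ => hcon w hw⟩
    rw [Finset.card_eq_zero.mp (Nat.le_zero.mp h0)] at this
    exact Finset.notMem_empty v this
  obtain ⟨M, hM1, hM2, hM3⟩ := exists_maximal_matching G R
  set U : Finset V := R.filter (fun v => v ∉ ends M) with hU
  have hUmem : ∀ {u}, u ∈ U ↔ u ∈ R ∧ u ∉ ends M := by
    intro u; simp [hU]
  have hUnbr : ∀ u ∈ U, ∀ w, G.Adj u w → w ∈ R → w ∈ ends M := by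
    intro u hu w hadj hwR
    by_contra hwm
    exact hM3 u (hUmem.mp hu).1 (hUmem.mp hu).2 w hwR hwm hadj
  by_cases hHall : ∀ s : Finset {x // x ∈ U},
      s.card ≤ (s.biUnion (fun u => nbrs G R u.1)).card
  · -- CASE 1
    obtain ⟨f, hfinj, hf⟩ := (Finset.all_card_le_biUnion_card_iff_exists_injective
      (fun u : {x // x ∈ U} => nbrs G R u.1)).mp hHall
    have hfadj : ∀ u, G.Adj u.1 (f u) := fun u => (mem_nbrs.mp (hf u)).2
    have hfR : ∀ u, f u ∈ R := fun u => (mem_nbrs.mp (hf u)).1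
    have hfe : ∀ u, f u ∈ ends M := fun u => hUnbr u.1 u.2 (f u) (hfadj u) (hfR u)
    -- pendant assignment as an Option-valued function
    have hex : ∀ x : V, ∃ o : Option V,
        ∀ v, v ∈ o ↔ ∃ u : {y // y ∈ U}, f u = x ∧ u.1 = v := by
      intro x
      by_cases h : ∃ u : {y // y ∈ U}, f u = x
      · refine ⟨some h.choose.1, fun v => ?_⟩
        simp only [Option.mem_def, Option.some_inj]
        constructor
        · rintro rfl; exact ⟨h.choose, h.choose_spec, rfl⟩
        · rintro ⟨u, hu, rfl⟩
          have : h.choose = u := hfinj (by rw [h.choose_spec, hu])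
          rw [this]
      · refine ⟨none, fun v => ?_⟩
        simp only [Option.mem_def]
        constructor
        · intro hc; cases hc
        · rintro ⟨u, hu, rfl⟩; exact absurd ⟨u, hu⟩ h
    choose pend hpend using hex
    have pend_sub : ∀ {v x : V}, v ∈ pend x → v ∈ U := by
      intro v x hv
      obtain ⟨u, -, rfl⟩ := (hpend x v).mp hv
      exact u.2
    set path : V × V → List V :=
      fun e => (pend e.1).toList ++ [e.1, e.2] ++ (pend e.2).toList with hpath
    have mem_path : ∀ {v : V} {e : V × V},
        v ∈ path e ↔ v ∈ pend e.1 ∨ v = e.1 ∨ v = e.2 ∨ v ∈ pend e.2 := by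
      intro v e
      simp only [hpath]
      exact mem_pend2
    have hpend_adj : ∀ {x v : V}, v ∈ pend x → G.Adj v x := by
      intro x v hv
      obtain ⟨u, hu, rfl⟩ := (hpend x v).mp hv
      have := hfadj u; rwa [hu] at this
    have hpend_nend : ∀ {x v : V}, v ∈ pend x → v ∉ ends M := by
      intro x v hv
      exact (hUmem.mp (pend_sub hv)).2
    have hpend_inj : ∀ {x y v : V}, v ∈ pend x → v ∈ pend y → x = y := by
      intro x y v hvx hvy
      obtain ⟨u, hu, hv⟩ := (hpend x v).mp hvx
      obtain ⟨u', hu', hv'⟩ := (hpend y v).mp hvy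
      have : u = u' := Subtype.ext (hv.trans hv'.symm)
      rw [← hu, ← hu', this]
    refine ⟨M.map path, ⟨?_, ?_, ?_⟩⟩
    · intro p hp
      obtain ⟨e, he, rfl⟩ := List.mem_map.mp hp
      have hadj : G.Adj e.1 e.2 := (hM1 e he).1
      constructor
      · simp only [hpath]
        exact chain_pend2 hadj (fun v hv => hpend_adj hv)
          (fun v hv => (hpend_adj hv).symm)
      · simp only [hpath, List.length_append, List.length_cons]
        omega
    · rw [List.nodup_flatten]
      have key : ∀ e ∈ M, ∀ e' ∈ M, (e.1 ≠ e'.1 ∧ e.1 ≠ e'.2 ∧ e.2 ≠ e'.1 ∧ e.2 ≠ e'.2) →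
          (path e).Disjoint (path e') := by
        intro e he e' he' hd v hv hv'
        have h1 : e'.1 ∈ ends M := mem_ends.mpr ⟨e', he', Or.inl rfl⟩
        have h2 : e'.2 ∈ ends M := mem_ends.mpr ⟨e', he', Or.inr rfl⟩
        have g1 : e.1 ∈ ends M := mem_ends.mpr ⟨e, he, Or.inl rfl⟩
        have g2 : e.2 ∈ ends M := mem_ends.mpr ⟨e, he, Or.inr rfl⟩
        rcases mem_path.mp hv with hp | rfl | rfl | hp <;>
          rcases mem_path.mp hv' with hq | hq | hq | hq
        · exact absurd (hpend_inj hp hq) hd.1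
        · exact hpend_nend hp (hq ▸ h1)
        · exact hpend_nend hp (hq ▸ h2)
        · exact absurd (hpend_inj hp hq) hd.2.1
        · exact hpend_nend hq g1
        · exact hd.1 hq
        · exact hd.2.1 hq
        · exact hpend_nend hq g1
        · exact hpend_nend hq g2
        · exact hd.2.2.1 hq
        · exact hd.2.2.2 hq
        · exact hpend_nend hq g2
        · exact absurd (hpend_inj hp hq) hd.2.2.1
        · exact hpend_nend hp (hq ▸ h1)
        · exact hpend_nend hp (hq ▸ h2)
        · exact absurd (hpend_inj hp hq) hd.2.2.2
      constructor
      · intro l hl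
        obtain ⟨e, he, rfl⟩ := List.mem_map.mp hl
        have hne : e.1 ≠ e.2 := (hM1 e he).1.ne
        have g1 : e.1 ∈ ends M := mem_ends.mpr ⟨e, he, Or.inl rfl⟩
        have g2 : e.2 ∈ ends M := mem_ends.mpr ⟨e, he, Or.inr rfl⟩
        simp only [hpath]
        refine nodup_pend2 hne ?_ ?_ ?_
        · intro v hv
          exact ⟨fun hEq => hpend_nend hv (hEq ▸ g1), fun hEq => hpend_nend hv (hEq ▸ g2)⟩
        · intro v hv
          exact ⟨fun hEq => hpend_nend hv (hEq ▸ g1), fun hEq => hpend_nend hv (hEq ▸ g2)⟩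
        · intro v hv w hw hEq
          subst hEq
          exact hne (hpend_inj hv hw)
      · refine List.pairwise_map.mpr ?_
        exact (ends_pairwise hM2).imp_of_mem (fun {e e'} he he' hd => key e he e' he' hd)
    · intro v
      rw [List.mem_flatten]
      constructor
      · rintro ⟨l, hl, hvl⟩
        obtain ⟨e, he, rfl⟩ := List.mem_map.mp hl
        rcases mem_path.mp hvl with hp | rfl | rfl | hp
        · exact (hUmem.mp (pend_sub hp)).1
        · exact (hM1 e he).2.1
        · exact (hM1 e he).2.2
        · exact (hUmem.mp (pend_sub hp)).1
      · intro hvR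
        by_cases hve : v ∈ ends M
        · obtain ⟨e, he, hv⟩ := mem_ends.mp hve
          refine ⟨path e, List.mem_map_of_mem he, ?_⟩
          rcases hv with rfl | rfl
          · exact mem_path.mpr (Or.inr (Or.inl rfl))
          · exact mem_path.mpr (Or.inr (Or.inr (Or.inl rfl)))
        · have hvU : v ∈ U := hUmem.mpr ⟨hvR, hve⟩
          set u : {y // y ∈ U} := ⟨v, hvU⟩ with hu
          have hm : v ∈ pend (f u) := (hpend (f u) v).mpr ⟨u, rfl, rfl⟩
          obtain ⟨e, he, hv⟩ := mem_ends.mp (hfe u)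
          refine ⟨path e, List.mem_map_of_mem he, ?_⟩
          rcases hv with h | h
          · exact mem_path.mpr (Or.inl (h ▸ hm))
          · exact mem_path.mpr (Or.inr (Or.inr (Or.inr (h ▸ hm))))
  · -- CASE 2
    push_neg at hHall
    obtain ⟨s, hs⟩ := hHall
    set Y : Finset V := s.biUnion (fun u => nbrs G R u.1) with hY
    have hYR : Y ⊆ R := by
      intro w hw
      rw [hY, Finset.mem_biUnion] at hw
      obtain ⟨u, -, hn⟩ := hw
      exact (mem_nbrs.mp hn).1
    have hsiso : s.image Subtype.val ⊆ isoSet G R Y := by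
      intro v hv
      obtain ⟨u, hu, rfl⟩ := Finset.mem_image.mp hv
      rw [mem_isoSet]
      refine ⟨(hUmem.mp u.2).1, ?_, ?_⟩
      · intro hmem
        rw [hY, Finset.mem_biUnion] at hmem
        obtain ⟨u', -, hn⟩ := hmem
        exact (hUmem.mp u.2).2
          (hUnbr u'.1 u'.2 u.1 (mem_nbrs.mp hn).2 (hUmem.mp u.2).1)
      · intro w hwR hwY hadj
        exact hwY (by
          rw [hY]
          exact Finset.mem_biUnion.mpr ⟨u, hu, mem_nbrs.mpr ⟨hwR, hadj⟩⟩)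
    have hYlt : (Y.card : ℤ) - ((isoSet G R Y).card : ℤ) ≤ -1 := by
      have h1 : s.card ≤ (isoSet G R Y).card := by
        calc s.card = (s.image Subtype.val).card :=
              (Finset.card_image_of_injective s Subtype.val_injective).symm
          _ ≤ _ := Finset.card_le_card hsiso
      have h2 : Y.card < s.card := hs
      omega
    obtain ⟨X₀, hX₀mem, hX₀min⟩ := Finset.exists_min_image R.powerset
      (fun X => (X.card : ℤ) - ((isoSet G R X).card : ℤ)) ⟨Y, Finset.mem_powerset.mpr hYR⟩
    have hX₀R : X₀ ⊆ R := Finset.mem_powerset.mp hX₀mem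
    set I : Finset V := isoSet G R X₀ with hI
    have hδ0 : (X₀.card : ℤ) - I.card ≤ -1 :=
      le_trans (hX₀min Y (Finset.mem_powerset.mpr hYR)) hYlt
    have hmin : ∀ X ⊆ R, (X₀.card : ℤ) - I.card ≤ (X.card : ℤ) - ((isoSet G R X).card : ℤ) :=
      fun X hX => hX₀min X (Finset.mem_powerset.mpr hX)
    have hIR : I ⊆ R := fun v hv => (mem_isoSet.mp hv).1
    have hInX : ∀ v ∈ I, v ∉ X₀ := fun v hv => (mem_isoSet.mp hv).2.1
    have hIiso : ∀ v ∈ I, ∀ w ∈ R, w ∉ X₀ → ¬ G.Adj v w :=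
      fun v hv => (mem_isoSet.mp hv).2.2
    have hIne : I.Nonempty := by
      rw [← Finset.card_pos]
      omega
    -- Hall 1 : covering with multiplicity ≤ 2
    have hHall1 : ∀ t : Finset {i // i ∈ I},
        t.card ≤ (t.biUnion
          (fun i => ((nbrs G R i.1) ∩ X₀) ×ˢ (Finset.univ : Finset (Fin 2)))).card := by
      intro t
      set W : Finset V := t.biUnion (fun i => (nbrs G R i.1) ∩ X₀) with hW
      have hprod : t.biUnion (fun i => ((nbrs G R i.1) ∩ X₀) ×ˢ (Finset.univ : Finset (Fin 2)))
          = W ×ˢ (Finset.univ : Finset (Fin 2)) := by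
        ext ⟨a, b⟩
        simp only [Finset.mem_biUnion, Finset.mem_product, Finset.mem_univ, and_true, hW]
      rw [hprod, Finset.card_product]
      have hWR : W ⊆ R := by
        intro w hw
        rw [hW, Finset.mem_biUnion] at hw
        obtain ⟨i, -, hi⟩ := hw
        exact hX₀R (Finset.mem_inter.mp hi).2
      have himg : t.image Subtype.val ⊆ isoSet G R W := by
        intro v hv
        obtain ⟨i, hi, rfl⟩ := Finset.mem_image.mp hv
        rw [mem_isoSet]
        refine ⟨hIR i.2, ?_, ?_⟩
        · intro hmem
          rw [hW, Finset.mem_biUnion] at hmem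
          obtain ⟨i', -, hi'⟩ := hmem
          exact hInX i.1 i.2 (Finset.mem_inter.mp hi').2
        · intro w hwR hwW hadj
          by_cases hwX : w ∈ X₀
          · exact hwW (by
              rw [hW]
              exact Finset.mem_biUnion.mpr
                ⟨i, hi, Finset.mem_inter.mpr ⟨mem_nbrs.mpr ⟨hwR, hadj⟩, hwX⟩⟩)
          · exact hIiso i.1 i.2 w hwR hwX hadj
      have h1 : t.card ≤ (isoSet G R W).card := by
        calc t.card = (t.image Subtype.val).card :=
              (Finset.card_image_of_injective t Subtype.val_injective).symm
          _ ≤ _ := Finset.card_le_card himg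
      have h2 := hcond W hWR
      have h3 : (Finset.univ : Finset (Fin 2)).card = 2 := by simp
      rw [h3]
      omega
    obtain ⟨g, hginj, hg⟩ := (Finset.all_card_le_biUnion_card_iff_exists_injective _).mp hHall1
    set ctr : {i // i ∈ I} → V := fun i => (g i).1 with hctr
    have hctrmem : ∀ i, (g i).1 ∈ (nbrs G R i.1) ∩ X₀ := fun i => (Finset.mem_product.mp (hg i)).1
    have hctrX : ∀ i, ctr i ∈ X₀ := fun i => (Finset.mem_inter.mp (hctrmem i)).2
    have hctradj : ∀ i, G.Adj i.1 (ctr i) :=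
      fun i => (mem_nbrs.mp (Finset.mem_inter.mp (hctrmem i)).1).2
    set fib : V → Finset {i // i ∈ I} :=
      fun x => Finset.univ.filter (fun i => ctr i = x) with hfib
    have hfibmem : ∀ {i : {i // i ∈ I}} {x : V}, i ∈ fib x ↔ ctr i = x := by
      intro i x
      simp [hfib]
    have hfib2 : ∀ x : V, (fib x).card ≤ 2 := by
      intro x
      have hle : (fib x).card ≤ (Finset.univ : Finset (Fin 2)).card := by
        refine Finset.card_le_card_of_injOn (fun i => (g i).2) (fun _ _ => Finset.mem_univ _) ?_
        intro i hi j hj hEq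
        apply hginj
        refine Prod.ext ?_ hEq
        have h1 : ctr i = x := hfibmem.mp hi
        have h2 : ctr j = x := hfibmem.mp hj
        rw [hctr] at h1 h2
        simp only at h1 h2
        rw [h1, h2]
      simpa using hle
    -- Hall 2 : matching from X₀ into I
    have hHall2 : ∀ t : Finset {x // x ∈ X₀},
        t.card ≤ (t.biUnion (fun x => (nbrs G R x.1) ∩ I)).card := by
      intro t
      set W : Finset V := t.biUnion (fun x => (nbrs G R x.1) ∩ I) with hW
      have hWI : W ⊆ I := by
        intro w hw
        rw [hW, Finset.mem_biUnion] at hw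
        obtain ⟨x, -, hx⟩ := hw
        exact (Finset.mem_inter.mp hx).2
      set T : Finset V := t.image Subtype.val with hT
      have hTX : T ⊆ X₀ := by
        intro w hw
        obtain ⟨x, -, rfl⟩ := Finset.mem_image.mp hw
        exact x.2
      have hsub : I \ W ⊆ isoSet G R (X₀ \ T) := by
        intro v hv
        rw [Finset.mem_sdiff] at hv
        rw [mem_isoSet]
        refine ⟨hIR hv.1, fun hmem => hInX v hv.1 (Finset.mem_sdiff.mp hmem).1, ?_⟩
        intro w hwR hw hadj
        by_cases hwX : w ∈ X₀
        · have hwT : w ∈ T := by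
            by_contra hwT
            exact hw (Finset.mem_sdiff.mpr ⟨hwX, hwT⟩)
          obtain ⟨x, hx, rfl⟩ := Finset.mem_image.mp hwT
          refine hv.2 (by
            rw [hW]
            exact Finset.mem_biUnion.mpr
              ⟨x, hx, Finset.mem_inter.mpr ⟨mem_nbrs.mpr ⟨hIR hv.1, hadj.symm⟩, hv.1⟩⟩)
        · exact hIiso v hv.1 w hwR hwX hadj
      have hcT : T.card = t.card := Finset.card_image_of_injective _ Subtype.val_injective
      have h1 : (I \ W).card ≤ (isoSet G R (X₀ \ T)).card := Finset.card_le_card hsub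
      have h2 : (I \ W).card = I.card - W.card := Finset.card_sdiff_of_subset hWI
      have h3 : (X₀ \ T).card = X₀.card - T.card := Finset.card_sdiff_of_subset hTX
      have h4 : W.card ≤ I.card := Finset.card_le_card hWI
      have h5 : T.card ≤ X₀.card := Finset.card_le_card hTX
      have h6 := hmin (X₀ \ T) (le_trans Finset.sdiff_subset hX₀R)
      rw [h3] at h6
      omega
    obtain ⟨mf, hmfinj, hmf⟩ := (Finset.all_card_le_biUnion_card_iff_exists_injective _).mp hHall2
    have hmfI : ∀ x, mf x ∈ I := fun x => (Finset.mem_inter.mp (hmf x)).2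
    have hmfadj : ∀ x, G.Adj x.1 (mf x) :=
      fun x => (mem_nbrs.mp (Finset.mem_inter.mp (hmf x)).1).2
    -- pendant (empty centers hung on their matched leaf)
    have hex2 : ∀ y : V, ∃ o : Option V, ∀ v, v ∈ o ↔
        ∃ x : {x // x ∈ X₀}, mf x = y ∧ fib x.1 = ∅ ∧ x.1 = v := by
      intro y
      by_cases h : ∃ x : {x // x ∈ X₀}, mf x = y ∧ fib x.1 = ∅
      · refine ⟨some h.choose.1, fun v => ?_⟩
        simp only [Option.mem_def, Option.some_inj]
        constructor
        · rintro rfl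
          exact ⟨h.choose, h.choose_spec.1, h.choose_spec.2, rfl⟩
        · rintro ⟨x, hx1, hx2, rfl⟩
          have : h.choose = x := hmfinj (h.choose_spec.1.trans hx1.symm)
          rw [this]
      · refine ⟨none, fun v => ?_⟩
        simp only [Option.mem_def]
        constructor
        · intro hc; cases hc
        · rintro ⟨x, hx1, hx2, rfl⟩
          exact absurd ⟨x, hx1, hx2⟩ h
    choose pnd hpnd using hex2
    have hpnd_X : ∀ {v y : V}, v ∈ pnd y → v ∈ X₀ := by
      intro v y hv
      obtain ⟨x, -, -, rfl⟩ := (hpnd y v).mp hv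
      exact x.2
    have hpnd_adj : ∀ {v y : V}, v ∈ pnd y → G.Adj v y := by
      intro v y hv
      obtain ⟨x, hx, -, rfl⟩ := (hpnd y v).mp hv
      have := hmfadj x
      rwa [hx] at this
    have hpnd_empty : ∀ {v y : V}, v ∈ pnd y → fib v = ∅ := by
      intro v y hv
      obtain ⟨x, -, hx2, rfl⟩ := (hpnd y v).mp hv
      exact hx2
    have hpnd_inj : ∀ {v y y' : V}, v ∈ pnd y → v ∈ pnd y' → y = y' := by
      intro v y y' hv hv'
      obtain ⟨x, hx, -, hxv⟩ := (hpnd y v).mp hv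
      obtain ⟨x', hx', -, hxv'⟩ := (hpnd y' v).mp hv'
      have : x = x' := Subtype.ext (hxv.trans hxv'.symm)
      rw [← hx, ← hx', this]
    set cpath : V → List V := fun x =>
      match (fib x).toList with
      | [i] => [x, i.1] ++ (pnd i.1).toList
      | [i, j] => (pnd i.1).toList ++ [i.1, x, j.1] ++ (pnd j.1).toList
      | _ => [] with hcpath
    set Cne : Finset V := X₀.filter (fun x => (fib x).Nonempty) with hCne
    have hCnemem : ∀ {x}, x ∈ Cne ↔ x ∈ X₀ ∧ (fib x).Nonempty := by
      intro x; simp [hCne]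
    have hshape : ∀ x ∈ Cne,
        (∃ i : {i // i ∈ I}, (fib x).toList = [i]) ∨
        (∃ i j : {i // i ∈ I}, (fib x).toList = [i, j]) := by
      intro x hx
      have hlen : (fib x).toList.length = (fib x).card := Finset.length_toList _
      have hc1 : 1 ≤ (fib x).card := Finset.card_pos.mpr (hCnemem.mp hx).2
      have hc2 := hfib2 x
      rcases hl : (fib x).toList with _ | ⟨i, _ | ⟨j, _ | ⟨k, tl⟩⟩⟩
      · rw [hl] at hlen; simp at hlen; omega
      · exact Or.inl ⟨i, rfl⟩
      · exact Or.inr ⟨i, j, rfl⟩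
      · rw [hl] at hlen; simp at hlen; omega
    have hfibtl : ∀ {x : V} {i : {i // i ∈ I}}, i ∈ (fib x).toList ↔ ctr i = x := by
      intro x i
      rw [Finset.mem_toList]
      exact hfibmem
    -- membership characterisation of cpath
    have hmem_cpath : ∀ x ∈ Cne, ∀ v : V, (v ∈ cpath x ↔
        v = x ∨ (∃ i : {i // i ∈ I}, ctr i = x ∧ i.1 = v) ∨
          (∃ i : {i // i ∈ I}, ctr i = x ∧ v ∈ pnd i.1)) := by
      intro x hx v
      rcases hshape x hx with ⟨i, hl⟩ | ⟨i, j, hl⟩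
      · have hcx : cpath x = [x, i.1] ++ (pnd i.1).toList := by
          simp only [hcpath]; rw [hl]
        have hif : ∀ k : {i // i ∈ I}, ctr k = x ↔ k = i := by
          intro k
          rw [← hfibtl, hl, List.mem_singleton]
        rw [hcx]
        simp only [List.mem_append, List.mem_cons, List.mem_singleton, List.not_mem_nil,
          or_false, Option.mem_toList, Option.mem_def]
        constructor
        · rintro ((rfl | rfl) | hp)
          · exact Or.inl rfl
          · exact Or.inr (Or.inl ⟨i, (hif i).mpr rfl, rfl⟩)
          · exact Or.inr (Or.inr ⟨i, (hif i).mpr rfl, hp⟩)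
        · rintro (rfl | ⟨k, hk, rfl⟩ | ⟨k, hk, hp⟩)
          · exact Or.inl (Or.inl rfl)
          · rw [(hif k).mp hk]
            exact Or.inl (Or.inr rfl)
          · rw [(hif k).mp hk] at hp
            exact Or.inr hp
      · have hcx : cpath x = (pnd i.1).toList ++ [i.1, x, j.1] ++ (pnd j.1).toList := by
          simp only [hcpath]; rw [hl]
        have hif : ∀ k : {i // i ∈ I}, ctr k = x ↔ k = i ∨ k = j := by
          intro k
          rw [← hfibtl, hl]
          simp
        rw [hcx, mem_pend3]
        constructor
        · rintro (hp | rfl | rfl | rfl | hp)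
          · exact Or.inr (Or.inr ⟨i, (hif i).mpr (Or.inl rfl), hp⟩)
          · exact Or.inr (Or.inl ⟨i, (hif i).mpr (Or.inl rfl), rfl⟩)
          · exact Or.inl rfl
          · exact Or.inr (Or.inl ⟨j, (hif j).mpr (Or.inr rfl), rfl⟩)
          · exact Or.inr (Or.inr ⟨j, (hif j).mpr (Or.inr rfl), hp⟩)
        · rintro (rfl | ⟨k, hk, rfl⟩ | ⟨k, hk, hp⟩)
          · exact Or.inr (Or.inr (Or.inl rfl))
          · rcases (hif k).mp hk with rfl | rfl
            · exact Or.inr (Or.inl rfl)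
            · exact Or.inr (Or.inr (Or.inr (Or.inl rfl)))
          · rcases (hif k).mp hk with rfl | rfl
            · exact Or.inl hp
            · exact Or.inr (Or.inr (Or.inr (Or.inr hp)))
    -- vertices of local paths lie in X₀ ∪ I
    have hmem_cpath_sub : ∀ x ∈ Cne, ∀ v ∈ cpath x, v ∈ X₀ ∪ I := by
      intro x hx v hv
      rcases (hmem_cpath x hx v).mp hv with rfl | ⟨i, -, rfl⟩ | ⟨i, -, hp⟩
      · exact Finset.mem_union_left _ (hCnemem.mp hx).1
      · exact Finset.mem_union_right _ i.2
      · exact Finset.mem_union_left _ (hpnd_X hp)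
    -- chains and lengths
    have hchain : ∀ x ∈ Cne, (cpath x).Chain' G.Adj ∧ 2 ≤ (cpath x).length := by
      intro x hx
      rcases hshape x hx with ⟨i, hl⟩ | ⟨i, j, hl⟩
      · have hcx : cpath x = [x, i.1] ++ (pnd i.1).toList := by
          simp only [hcpath]; rw [hl]
        have hctri : ctr i = x := hfibtl.mp (by rw [hl]; exact List.mem_singleton.mpr rfl)
        constructor
        · rw [hcx]
          have : ([x, i.1] ++ (pnd i.1).toList)
              = (none : Option V).toList ++ [x, i.1] ++ (pnd i.1).toList := rfl
          rw [this]
          refine chain_pend2 ?_ (by simp) ?_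
          · rw [← hctri]; exact (hctradj i).symm
          · intro v hv
            exact (hpnd_adj hv).symm
        · rw [hcx]; simp
      · have hcx : cpath x = (pnd i.1).toList ++ [i.1, x, j.1] ++ (pnd j.1).toList := by
          simp only [hcpath]; rw [hl]
        have hctri : ctr i = x := hfibtl.mp (by rw [hl]; simp)
        have hctrj : ctr j = x := hfibtl.mp (by rw [hl]; simp)
        constructor
        · rw [hcx]
          refine chain_pend3 ?_ ?_ ?_ ?_
          · rw [← hctri]; exact hctradj i
          · rw [← hctrj]; exact (hctradj j).symm
          · intro v hv; exact hpnd_adj hv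
          · intro v hv; exact (hpnd_adj hv).symm
        · rw [hcx]; simp
          omega
    -- nodup of each cpath
    have hIX₀dis : ∀ {v : V}, v ∈ I → v ∈ X₀ → False := fun hv hx => hInX _ hv hx
    have hnodup : ∀ x ∈ Cne, (cpath x).Nodup := by
      intro x hx
      have hxX : x ∈ X₀ := (hCnemem.mp hx).1
      have hxfib : (fib x).Nonempty := (hCnemem.mp hx).2
      have hpnd_ne_x : ∀ {v y : V}, v ∈ pnd y → v ≠ x := by
        intro v y hv hEq
        have := hpnd_empty hv
        rw [hEq] at this
        rw [this] at hxfib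
        exact Finset.not_nonempty_empty hxfib
      rcases hshape x hx with ⟨i, hl⟩ | ⟨i, j, hl⟩
      · have hcx : cpath x = [x, i.1] ++ (pnd i.1).toList := by
          simp only [hcpath]; rw [hl]
        rw [hcx]
        have : ([x, i.1] ++ (pnd i.1).toList)
            = (none : Option V).toList ++ [x, i.1] ++ (pnd i.1).toList := rfl
        rw [this]
        refine nodup_pend2 ?_ (by simp) ?_ (by simp)
        · intro hEq
          exact hIX₀dis i.2 (hEq ▸ hxX)
        · intro v hv
          refine ⟨hpnd_ne_x hv, fun hEq => hIX₀dis (hEq ▸ i.2) (hpnd_X hv)⟩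
      · have hcx : cpath x = (pnd i.1).toList ++ [i.1, x, j.1] ++ (pnd j.1).toList := by
          simp only [hcpath]; rw [hl]
        have hij : i ≠ j := by
          have := Finset.nodup_toList (fib x)
          rw [hl] at this
          simp at this
          exact fun hEq => this (hEq ▸ rfl)
        rw [hcx]
        refine nodup_pend3 ?_ ?_ ?_ ?_ ?_ ?_
        · intro hEq; exact hIX₀dis i.2 (hEq ▸ hxX)
        · intro hEq; exact hij (Subtype.ext hEq)
        · intro hEq; exact hIX₀dis j.2 (hEq.symm ▸ hxX)
        · intro v hv
          refine ⟨fun hEq => hIX₀dis (hEq ▸ i.2) (hpnd_X hv), hpnd_ne_x hv,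
            fun hEq => hIX₀dis (hEq ▸ j.2) (hpnd_X hv)⟩
        · intro v hv
          refine ⟨fun hEq => hIX₀dis (hEq ▸ i.2) (hpnd_X hv), hpnd_ne_x hv,
            fun hEq => hIX₀dis (hEq ▸ j.2) (hpnd_X hv)⟩
        · intro v hv w hw hEq
          subst hEq
          have := hpnd_inj hv hw
          exact hij (Subtype.ext this)
    -- pairwise disjointness of local paths
    have hdisj : ∀ x ∈ Cne, ∀ x' ∈ Cne, x ≠ x' → (cpath x).Disjoint (cpath x') := by
      intro x hx x' hx' hne v hv hv'
      rcases (hmem_cpath x hx v).mp hv with h0 | ⟨i, hi, h0⟩ | ⟨i, hi, h0⟩ <;>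
        rcases (hmem_cpath x' hx' v).mp hv' with h' | ⟨i', hi', h'⟩ | ⟨i', hi', h'⟩
      · exact hne (h0.symm.trans h')
      · exact hIX₀dis (h' ▸ i'.2) (h0.symm ▸ (hCnemem.mp hx).1)
      · have h2 := (hCnemem.mp hx).2
        rw [← h0] at h2
        rw [hpnd_empty h'] at h2
        exact Finset.not_nonempty_empty h2
      · exact hIX₀dis (h0 ▸ i.2) (h'.symm ▸ (hCnemem.mp hx').1)
      · have hii : i = i' := Subtype.ext (h0.trans h'.symm)
        rw [hii] at hi
        exact hne (hi.symm.trans hi')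
      · exact hIX₀dis (h0 ▸ i.2) (hpnd_X h')
      · have h2 := (hCnemem.mp hx').2
        rw [← h'] at h2
        rw [hpnd_empty h0] at h2
        exact Finset.not_nonempty_empty h2
      · exact hIX₀dis (h' ▸ i'.2) (hpnd_X h0)
      · have hii : i = i' := Subtype.ext (hpnd_inj h0 h')
        rw [hii] at hi
        exact hne (hi.symm.trans hi')
    -- the remaining region
    set R' : Finset V := R \ (X₀ ∪ I) with hR'
    have hR'sub : R' ⊆ R := Finset.sdiff_subset
    have hR'card : R'.card < n := by
      rw [← hn]
      refine Finset.card_lt_card ?_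
      rw [Finset.ssubset_iff_of_subset hR'sub]
      obtain ⟨i0, hi0⟩ := hIne
      exact ⟨i0, hIR hi0, by
        rw [hR']
        simp only [Finset.mem_sdiff, Finset.mem_union]
        tauto⟩
    have hcond' : Cond G R' := by
      intro X hX
      have hXR : X ⊆ R := le_trans hX hR'sub
      have hXX₀ : Disjoint X X₀ := by
        rw [Finset.disjoint_left]
        intro a ha haX₀
        have := hX ha
        rw [hR', Finset.mem_sdiff, Finset.mem_union] at this
        exact this.2 (Or.inl haX₀)
      have hXI : Disjoint X I := by
        rw [Finset.disjoint_left]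
        intro a ha haI
        have := hX ha
        rw [hR', Finset.mem_sdiff, Finset.mem_union] at this
        exact this.2 (Or.inr haI)
      have hsub : (isoSet G R' X) ∪ I ⊆ isoSet G R (X ∪ X₀) := by
        intro z hz
        rw [Finset.mem_union] at hz
        rcases hz with hz | hz
        · rw [mem_isoSet] at hz ⊢
          have hzR' : z ∈ R' := hz.1
          have hzR : z ∈ R := hR'sub hzR'
          have hzX₀ : z ∉ X₀ := by
            intro hc
            rw [hR', Finset.mem_sdiff, Finset.mem_union] at hzR'
            exact hzR'.2 (Or.inl hc)
          have hzI : z ∉ I := by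
            intro hc
            rw [hR', Finset.mem_sdiff, Finset.mem_union] at hzR'
            exact hzR'.2 (Or.inr hc)
          refine ⟨hzR, ?_, ?_⟩
          · rw [Finset.mem_union]
            rintro (hc | hc)
            · exact hz.2.1 hc
            · exact hzX₀ hc
          · intro w hwR hw hadj
            rw [Finset.mem_union] at hw
            push_neg at hw
            by_cases hwR' : w ∈ R'
            · exact hz.2.2 w hwR' hw.1 hadj
            · rw [hR', Finset.mem_sdiff, Finset.mem_union] at hwR'
              push_neg at hwR'
              rcases hwR' hwR with hwX₀ | hwI
              · exact hw.2 hwX₀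
              · exact hIiso w hwI z hzR hzX₀ hadj.symm
        · rw [mem_isoSet]
          refine ⟨hIR hz, ?_, ?_⟩
          · rw [Finset.mem_union]
            rintro (hc | hc)
            · exact (Finset.disjoint_right.mp hXI hz) hc
            · exact hInX z hz hc
          · intro w hwR hw hadj
            rw [Finset.mem_union] at hw
            push_neg at hw
            exact hIiso z hz w hwR hw.2 hadj
      have hdisIso : Disjoint (isoSet G R' X) I := by
        rw [Finset.disjoint_left]
        intro a ha haI
        have haR' : a ∈ R' := (mem_isoSet.mp ha).1
        rw [hR', Finset.mem_sdiff, Finset.mem_union] at haR'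
        exact haR'.2 (Or.inr haI)
      have hcard1 : (isoSet G R' X).card + I.card ≤ (isoSet G R (X ∪ X₀)).card := by
        rw [← Finset.card_union_of_disjoint hdisIso]
        exact Finset.card_le_card hsub
      have hcard2 : (X ∪ X₀).card = X.card + X₀.card := by
        rw [Finset.card_union_of_disjoint hXX₀]
      have h6 := hmin (X ∪ X₀) (Finset.union_subset hXR hX₀R)
      rw [hcard2] at h6
      omega
    obtain ⟨L', hL'⟩ := ih R'.card hR'card R' rfl hcond'
    refine ⟨(Cne.toList.map cpath) ++ L', ?_, ?_, ?_⟩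
    · intro p hp
      rw [List.mem_append] at hp
      rcases hp with hp | hp
      · obtain ⟨x, hx, rfl⟩ := List.mem_map.mp hp
        exact hchain x (Finset.mem_toList.mp hx)
      · exact hL'.1 p hp
    · rw [List.flatten_append, List.nodup_append]
      refine ⟨?_, hL'.2.1, ?_⟩
      · rw [List.nodup_flatten]
        constructor
        · intro l hl
          obtain ⟨x, hx, rfl⟩ := List.mem_map.mp hl
          exact hnodup x (Finset.mem_toList.mp hx)
        · refine List.pairwise_map.mpr ?_
          have hnd : Cne.toList.Nodup := Finset.nodup_toList _
          exact hnd.imp_of_mem (fun {x x'} hx hx' hne =>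
            hdisj x (Finset.mem_toList.mp hx) x' (Finset.mem_toList.mp hx') hne)
      · intro v hv w hv' hvw
        subst hvw
        obtain ⟨l, hl, hvl⟩ := List.mem_flatten.mp hv
        obtain ⟨x, hx, rfl⟩ := List.mem_map.mp hl
        have hvXI : v ∈ X₀ ∪ I := hmem_cpath_sub x (Finset.mem_toList.mp hx) v hvl
        have hvR' : v ∈ R' := (hL'.2.2 v).mp hv'
        rw [hR', Finset.mem_sdiff] at hvR'
        exact hvR'.2 hvXI
    · intro v
      rw [List.flatten_append, List.mem_append]
      constructor
      · rintro (hv | hv)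
        · obtain ⟨l, hl, hvl⟩ := List.mem_flatten.mp hv
          obtain ⟨x, hx, rfl⟩ := List.mem_map.mp hl
          have := hmem_cpath_sub x (Finset.mem_toList.mp hx) v hvl
          rw [Finset.mem_union] at this
          rcases this with h | h
          · exact hX₀R h
          · exact hIR h
        · exact hR'sub ((hL'.2.2 v).mp hv)
      · intro hvR
        by_cases hvR' : v ∈ R'
        · exact Or.inr ((hL'.2.2 v).mpr hvR')
        · rw [hR', Finset.mem_sdiff, Finset.mem_union] at hvR'
          push_neg at hvR'
          left
          rcases hvR' hvR with hvX | hvI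
          · by_cases hfx : (fib v).Nonempty
            · have hvC : v ∈ Cne := hCnemem.mpr ⟨hvX, hfx⟩
              refine List.mem_flatten.mpr ⟨cpath v, List.mem_map_of_mem (Finset.mem_toList.mpr hvC), ?_⟩
              exact (hmem_cpath v hvC v).mpr (Or.inl rfl)
            · rw [Finset.not_nonempty_iff_eq_empty] at hfx
              set xv : {x // x ∈ X₀} := ⟨v, hvX⟩ with hxv
              set iv : {i // i ∈ I} := ⟨mf xv, hmfI xv⟩ with hiv
              set x' : V := ctr iv with hx'
              have hx'C : x' ∈ Cne := by
                refine hCnemem.mpr ⟨hctrX iv, ⟨iv, hfibmem.mpr rfl⟩⟩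
              have hvp : v ∈ pnd iv.1 := by
                refine (hpnd iv.1 v).mpr ⟨xv, rfl, hfx, rfl⟩
              refine List.mem_flatten.mpr ⟨cpath x',
                List.mem_map_of_mem (Finset.mem_toList.mpr hx'C), ?_⟩
              exact (hmem_cpath x' hx'C v).mpr (Or.inr (Or.inr ⟨iv, rfl, hvp⟩))
          · set iv : {i // i ∈ I} := ⟨v, hvI⟩ with hiv
            set x' : V := ctr iv with hx'
            have hx'C : x' ∈ Cne := hCnemem.mpr ⟨hctrX iv, ⟨iv, hfibmem.mpr rfl⟩⟩
            refine List.mem_flatten.mpr ⟨cpath x',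
              List.mem_map_of_mem (Finset.mem_toList.mpr hx'C), ?_⟩
            exact (hmem_cpath x' hx'C v).mpr (Or.inr (Or.inl ⟨iv, rfl, rfl⟩))


/-- The spanning subgraph determined by a path system. -/
def sysGraph (L : List (List V)) : SimpleGraph V :=
  SimpleGraph.fromRel (fun u v => ∃ p ∈ L, ∃ n : ℕ, ∃ h : n + 1 < p.length,
    p[n] = u ∧ p[n+1] = v)

lemma pairwise_unique {L : List (List V)} (hpw : List.Pairwise List.Disjoint L)
    {p q : List V} {v : V}
    (hp : p ∈ L) (hq : q ∈ L) (hvp : v ∈ p) (hvq : v ∈ q) : p = q := by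
  induction L with
  | nil => cases hp
  | cons a tl ih =>
      obtain ⟨ha, htl⟩ := List.pairwise_cons.mp hpw
      rcases List.mem_cons.mp hp with rfl | hp <;> rcases List.mem_cons.mp hq with h | hq
      · rw [h]
      · exact absurd hvq (ha q hq hvp)
      · exact absurd hvp (ha p hp (h ▸ hvq))
      · exact ih htl hp hq

lemma mem_unique {L : List (List V)} (hnd : L.flatten.Nodup) {p q : List V} {v : V}
    (hp : p ∈ L) (hq : q ∈ L) (hvp : v ∈ p) (hvq : v ∈ q) : p = q :=
  pairwise_unique (List.nodup_flatten.mp hnd).2 hp hq hvp hvq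

lemma sysGraph_adj_consec {G : SimpleGraph V} {R : Finset V} {L : List (List V)}
    (hS : IsSys G R L) {p : List V} (hp : p ∈ L) {n : ℕ} (h : n + 1 < p.length) :
    (sysGraph L).Adj p[n] p[n+1] := by
  have hnd : p.Nodup := by
    have := (List.nodup_flatten.mp hS.2.1).1 p hp
    exact this
  refine ⟨?_, Or.inl ⟨p, hp, n, h, rfl, rfl⟩⟩
  intro hEq
  have := (List.Nodup.getElem_inj_iff hnd).mp hEq
  omega

lemma sysGraph_le {G : SimpleGraph V} {R : Finset V} {L : List (List V)}
    (hS : IsSys G R L) : sysGraph L ≤ G := by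
  rintro u v ⟨hne, h | h⟩
  · obtain ⟨p, hp, n, h, hu, hv⟩ := h
    have hc := (hS.1 p hp).1
    have := List.isChain_iff_getElem.mp hc n (by omega)
    rwa [hu, hv] at this
  · obtain ⟨p, hp, n, h, hv, hu⟩ := h
    have hc := (hS.1 p hp).1
    have := List.isChain_iff_getElem.mp hc n (by omega)
    rw [hv, hu] at this
    exact this.symm

lemma sysGraph_adj_mem {G : SimpleGraph V} {R : Finset V} {L : List (List V)}
    (hS : IsSys G R L) {p : List V} (hp : p ∈ L) {u v : V}
    (huv : (sysGraph L).Adj u v) (hu : u ∈ p) : v ∈ p := by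
  rcases huv with ⟨-, h | h⟩ <;> obtain ⟨q, hq, n, hn, h1, h2⟩ := h
  · have : q = p := mem_unique hS.2.1 hq hp (h1 ▸ List.getElem_mem _) hu
    subst this
    exact h2 ▸ List.getElem_mem _
  · have : q = p := mem_unique hS.2.1 hq hp (h2 ▸ List.getElem_mem _) hu
    subst this
    exact h1 ▸ List.getElem_mem _

lemma sysGraph_reach_mem {G : SimpleGraph V} {R : Finset V} {L : List (List V)}
    (hS : IsSys G R L) {p : List V} (hp : p ∈ L) {u v : V}
    (hr : (sysGraph L).Reachable u v) (hu : u ∈ p) : v ∈ p := by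
  obtain ⟨w⟩ := hr
  induction w with
  | nil => exact hu
  | cons h w ih => exact ih (sysGraph_adj_mem hS hp h hu)

lemma sysGraph_reach_of_mem {G : SimpleGraph V} {R : Finset V} {L : List (List V)}
    (hS : IsSys G R L) {p : List V} (hp : p ∈ L) {u v : V}
    (hu : u ∈ p) (hv : v ∈ p) : (sysGraph L).Reachable u v := by
  have key : ∀ n (h : n < p.length), (sysGraph L).Reachable p[0] p[n] := by
    intro n
    induction n with
    | zero => intro h; exact Reachable.refl _
    | succ k ih =>
        intro h
        exact (ih (by omega)).trans (sysGraph_adj_consec hS hp (by omega)).reachable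
  obtain ⟨nu, hnu, rfl⟩ := List.mem_iff_getElem.mp hu
  obtain ⟨nv, hnv, rfl⟩ := List.mem_iff_getElem.mp hv
  exact (key nu hnu).symm.trans (key nv hnv)


lemma sys_hasPathFactor [Fintype V] (hS : IsSys G Finset.univ L) :
    HasPathFactor G 2 := by
  classical
  refine ⟨sysGraph L, sysGraph_le hS, ?_⟩
  intro C
  induction C using ConnectedComponent.ind with
  | _ v =>
  obtain ⟨p, hp, hvp⟩ : ∃ p ∈ L, v ∈ p := by
    have : v ∈ L.flatten := (hS.2.2 v).mpr (Finset.mem_univ v)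
    exact List.mem_flatten.mp this
  have hnd : p.Nodup := (List.nodup_flatten.mp hS.2.1).1 p hp
  have hsupp : ((sysGraph L).connectedComponentMk v).supp = {w | w ∈ p} := by
    ext w
    simp only [ConnectedComponent.mem_supp_iff, ConnectedComponent.eq, Set.mem_setOf_eq]
    constructor
    · intro h; exact sysGraph_reach_mem hS hp h.symm hvp
    · intro h; exact sysGraph_reach_of_mem hS hp h hvp
  refine ⟨p.length, (hS.1 p hp).2, ?_⟩
  rw [hsupp]
  have idx_eq : ∀ {n : ℕ} (h : n < p.length) {x : V}, p[n] = x → p.idxOf x = n := by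
    intro n h x hx
    have hxp : x ∈ p := hx ▸ List.getElem_mem _
    have h1 : p.idxOf x < p.length := List.idxOf_lt_length_iff.mpr hxp
    have h2 : p[p.idxOf x] = x := List.getElem_idxOf h1
    exact (List.Nodup.getElem_inj_iff hnd).mp (h2.trans hx.symm)
  refine ⟨⟨⟨fun x => ⟨p.idxOf x.1, List.idxOf_lt_length_iff.mpr x.2⟩,
      fun j => ⟨p[j.1], List.getElem_mem _⟩, ?_, ?_⟩, ?_⟩⟩
  · intro x
    exact Subtype.ext (List.getElem_idxOf _)
  · intro j
    exact Fin.ext (idx_eq j.2 rfl)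
  · intro a b
    simp only [Equiv.coe_fn_mk, pathGraph_adj, comap_adj, Function.Embedding.coe_subtype]
    constructor
    · rintro (h | h)
      · have hlt : p.idxOf (a:V) + 1 < p.length := h ▸ List.idxOf_lt_length_iff.mpr b.2
        have hadj := sysGraph_adj_consec hS hp hlt
        have hb : p[p.idxOf (a:V) + 1]'hlt = (b : V) := by
          rw [← List.getElem_idxOf (List.idxOf_lt_length_iff.mpr b.2)]
          congr 1
        have ha : p[p.idxOf (a:V)]'(List.idxOf_lt_length_iff.mpr a.2) = (a : V) :=
          List.getElem_idxOf _
        rw [ha, hb] at hadj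
        exact hadj
      · have hlt : p.idxOf (b:V) + 1 < p.length := h ▸ List.idxOf_lt_length_iff.mpr a.2
        have hadj := sysGraph_adj_consec hS hp hlt
        have ha : p[p.idxOf (b:V) + 1]'hlt = (a : V) := by
          rw [← List.getElem_idxOf (List.idxOf_lt_length_iff.mpr a.2)]
          congr 1
        have hb : p[p.idxOf (b:V)]'(List.idxOf_lt_length_iff.mpr b.2) = (b : V) :=
          List.getElem_idxOf _
        rw [ha, hb] at hadj
        exact hadj.symm
    · rintro ⟨hne, h | h⟩ <;> obtain ⟨q, hq, n, hn, h1, h2⟩ := h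
      · have hqp : q = p := mem_unique hS.2.1 hq hp (h1 ▸ List.getElem_mem _) a.2
        subst hqp
        left
        rw [idx_eq (by omega) h1, idx_eq hn h2]
      · have hqp : q = p := mem_unique hS.2.1 hq hp (h2 ▸ List.getElem_mem _) a.2
        subst hqp
        right
        rw [idx_eq (by omega) h1, idx_eq hn h2]


lemma exists_adj_of_factor {F : SimpleGraph V}
    (hcomp : ∀ C : F.ConnectedComponent,
      ∃ m : ℕ, 2 ≤ m ∧ Nonempty ((F.induce C.supp) ≃g pathGraph m)) (v : V) :
    ∃ w, F.Adj v w := by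
  obtain ⟨m, hm, ⟨φ⟩⟩ := hcomp (F.connectedComponentMk v)
  set C := F.connectedComponentMk v with hC
  have hv : v ∈ C.supp := by simp [ConnectedComponent.mem_supp_iff, hC]
  set a : ↥C.supp := ⟨v, hv⟩ with ha
  set j : Fin m := φ a with hj
  have hkey : ∀ k : Fin m, (pathGraph m).Adj j k → ∃ w, F.Adj v w := by
    intro k hadj
    refine ⟨(φ.symm k : ↥C.supp), ?_⟩
    have : (F.induce C.supp).Adj (φ.symm j) (φ.symm k) := by
      rw [φ.symm.map_rel_iff]
      exact hadj
    rw [hj, RelIso.symm_apply_apply] at this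
    exact this
  by_cases hlt : (j : ℕ) + 1 < m
  · exact hkey ⟨(j : ℕ) + 1, hlt⟩ (by rw [pathGraph_adj]; left; rfl)
  · have hj1 : 1 ≤ (j : ℕ) := by
      have := j.2; omega
    refine hkey ⟨(j : ℕ) - 1, by omega⟩ (by rw [pathGraph_adj]; right; simp; omega)

open scoped Classical in
lemma deg_le_of_factor [Fintype V] {F : SimpleGraph V}
    (hcomp : ∀ C : F.ConnectedComponent,
      ∃ m : ℕ, 2 ≤ m ∧ Nonempty ((F.induce C.supp) ≃g pathGraph m)) (x : V) :
    (univ.filter (fun w => F.Adj x w)).card ≤ 2 := by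
  classical
  obtain ⟨m, hm, ⟨φ⟩⟩ := hcomp (F.connectedComponentMk x)
  set C := F.connectedComponentMk x with hC
  have hx : x ∈ C.supp := by simp [ConnectedComponent.mem_supp_iff, hC]
  have hmem : ∀ w, F.Adj x w → w ∈ C.supp := by
    intro w hw
    simp only [ConnectedComponent.mem_supp_iff, hC]
    exact (ConnectedComponent.eq).mpr hw.reachable.symm
  have key : ∀ w (hw : F.Adj x w),
      ((φ ⟨w, hmem w hw⟩ : Fin m) : ℕ) + 1 = ((φ ⟨x, hx⟩ : Fin m) : ℕ) ∨
      ((φ ⟨x, hx⟩ : Fin m) : ℕ) + 1 = ((φ ⟨w, hmem w hw⟩ : Fin m) : ℕ) := by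
    intro w hw
    have : (F.induce C.supp).Adj ⟨x, hx⟩ ⟨w, hmem w hw⟩ := hw
    rw [← φ.map_rel_iff, pathGraph_adj] at this
    tauto
  have : ∀ w ∈ univ.filter (fun w => F.Adj x w), ∀ w' ∈ univ.filter (fun w => F.Adj x w),
      (fun w => decide (∃ hw : F.Adj x w, ((φ ⟨w, hmem w hw⟩ : Fin m) : ℕ) + 1
        = ((φ ⟨x, hx⟩ : Fin m) : ℕ))) w =
      (fun w => decide (∃ hw : F.Adj x w, ((φ ⟨w, hmem w hw⟩ : Fin m) : ℕ) + 1
        = ((φ ⟨x, hx⟩ : Fin m) : ℕ))) w' → w = w' := by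
    intro w hw w' hw' heq
    simp only [mem_filter, mem_univ, true_and] at hw hw'
    have h1 := key w hw
    have h2 := key w' hw'
    simp only [decide_eq_decide] at heq
    have hval : ((φ ⟨w, hmem w hw⟩ : Fin m) : ℕ) = ((φ ⟨w', hmem w' hw'⟩ : Fin m) : ℕ) := by
      rcases h1 with h1 | h1 <;> rcases h2 with h2 | h2
      · omega
      · exfalso
        have : ¬ (∃ hw' : F.Adj x w', ((φ ⟨w', hmem w' hw'⟩ : Fin m) : ℕ) + 1
            = ((φ ⟨x, hx⟩ : Fin m) : ℕ)) := by
          rintro ⟨h, hh⟩; omega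
        have hyes : (∃ hww : F.Adj x w, ((φ ⟨w, hmem w hww⟩ : Fin m) : ℕ) + 1
            = ((φ ⟨x, hx⟩ : Fin m) : ℕ)) := ⟨hw, h1⟩
        rw [heq] at hyes
        exact this hyes
      · exfalso
        have : ¬ (∃ hww : F.Adj x w, ((φ ⟨w, hmem w hww⟩ : Fin m) : ℕ) + 1
            = ((φ ⟨x, hx⟩ : Fin m) : ℕ)) := by
          rintro ⟨h, hh⟩; omega
        have hyes : (∃ hw' : F.Adj x w', ((φ ⟨w', hmem w' hw'⟩ : Fin m) : ℕ) + 1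
            = ((φ ⟨x, hx⟩ : Fin m) : ℕ)) := ⟨hw', h2⟩
        rw [← heq] at hyes
        exact this hyes
      · omega
    have : φ ⟨w, hmem w hw⟩ = φ ⟨w', hmem w' hw'⟩ := Fin.ext hval
    have := φ.toEquiv.injective this
    exact Subtype.ext_iff.mp this
  have hcard := Finset.card_le_card_of_injOn _ (fun w _ => Finset.mem_univ _) this
  calc (univ.filter (fun w => F.Adj x w)).card ≤ (univ : Finset Bool).card := hcard
    _ = 2 := by simp

lemma cond_of_factor [Fintype V] (h : HasPathFactor G 2) :
    ∀ X : Finset V, (isoSet G univ X).card ≤ 2 * X.card := by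
  classical
  obtain ⟨F, hFG, hcomp⟩ := h
  intro X
  set f : V → V := fun v => (exists_adj_of_factor hcomp v).choose with hf
  have hfadj : ∀ v, F.Adj v (f v) := fun v => (exists_adj_of_factor hcomp v).choose_spec
  refine Finset.card_le_mul_card_image_of_maps_to (f := f) ?_ 2 ?_
  · intro v hv
    rw [mem_isoSet] at hv
    by_contra hfx
    exact hv.2.2 (f v) (mem_univ _) hfx (hFG (hfadj v))
  · intro x hx
    refine le_trans (Finset.card_le_card (t := univ.filter (fun w => F.Adj x w)) ?_) (deg_le_of_factor hcomp x)
    intro v hv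
    simp only [mem_filter] at hv ⊢
    refine ⟨mem_univ _, ?_⟩
    have := hfadj v
    rw [hv.2] at this
    exact this.symm

lemma isolCount_bridge [Fintype V] (G : SimpleGraph V) (X : Set V) (Y : Finset V)
    (hXY : ∀ v, v ∈ Y ↔ v ∈ X) :
    isolCount (G.induce (Xᶜ : Set V)) = (isoSet G univ Y).card := by
  classical
  rw [isolCount, ← Nat.card_eq_finsetCard]
  refine Nat.card_congr ⟨fun a => ⟨a.1.1, ?_⟩, fun v => ⟨⟨v.1, ?_⟩, ?_⟩, ?_, ?_⟩
  · rw [mem_isoSet]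
    refine ⟨mem_univ _, ?_, fun w _ hw hadj => ?_⟩
    · rw [hXY]
      exact a.1.2
    · exact a.2 ⟨w, by rw [Set.mem_compl_iff, ← hXY]; exact hw⟩ hadj
  · have := v.2
    rw [mem_isoSet] at this
    rw [Set.mem_compl_iff, ← hXY]
    exact this.2.1
  · intro w hadj
    have hv := v.2
    rw [mem_isoSet] at hv
    refine hv.2.2 w.1 (mem_univ _) ?_ hadj
    rw [hXY]
    exact w.2
  · intro a; rfl
  · intro v; rfl


end LVAux

/-- Theorem 1 (Las Vergnas): `G` has a `P_{≥2}`-factor iff `i(G−X) ≤ 2|X|` for every `X`. -/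
theorem stmt0 {V : Type*} [Fintype V] (G : SimpleGraph V) :
    HasPathFactor G 2 ↔
      ∀ X : Set V, isolCount (G.induce (Xᶜ : Set V)) ≤ 2 * Nat.card X := by
  classical
  constructor
  · intro h X
    have hc := LVAux.cond_of_factor h
    set Y : Finset V := Finset.univ.filter (fun v => v ∈ X) with hY
    have hXY : ∀ v, v ∈ Y ↔ v ∈ X := by simp [hY]
    rw [LVAux.isolCount_bridge G X Y hXY]
    have hNX : Nat.card X = Y.card := by
      rw [← Nat.card_eq_finsetCard]
      exact Nat.card_congr (Equiv.subtypeEquivRight (fun v => (hXY v).symm))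
    rw [hNX]
    exact hc Y
  · intro h
    have hcond : LVAux.Cond G Finset.univ := by
      intro Xf _
      have hthis := h (↑Xf : Set V)
      rw [LVAux.isolCount_bridge G (↑Xf : Set V) Xf (by simp)] at hthis
      have hcc : Nat.card (↑Xf : Set V) = Xf.card := by
        rw [← Nat.card_eq_finsetCard]
        exact Nat.card_congr (Equiv.subtypeEquivRight (by simp))
      rw [hcc] at hthis
      exact hthis
    obtain ⟨L, hL⟩ := LVAux.core G (Finset.univ.card) Finset.univ rfl hcond
    exact LVAux.sys_hasPathFactor hL
end

section
/- Let n, r be nonnegative integers, G an (n+r+2)-connected non-complete graph with I(G) > (n+r+3)/(2(r+2)), let W ⊆ V(G) with |W| = n, let e ∈ E(G−W), and set H = G−W−e. If X ⊆ V(H) satisfies i(H−X) ≥ 2|X|+1, then |X| ≥ r+2. -/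
open SimpleGraph

lemma mindeg {V : Type*} [Fintype V] {G : SimpleGraph V} {k : ℕ}
    (h : IsKConnected G k) (v : V) : k ≤ {w : V | G.Adj v w}.ncard := by
  by_contra hlt
  push_neg at hlt
  set S : Set V := {w | G.Adj v w} with hS
  have hcard : Nat.card S < k := by rwa [Nat.card_coe_set_eq]
  have hconn := h.2 S hcard
  have hv : v ∈ Sᶜ := by simp [hS]
  have htot : S.ncard + Sᶜ.ncard = Nat.card V := Set.ncard_add_ncard_compl S
  have hS2 : 1 < Sᶜ.ncard := by have := h.1; omega
  obtain ⟨u, hu, hne⟩ := Set.exists_ne_of_one_lt_ncard hS2 v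
  obtain ⟨p⟩ := hconn.preconnected ⟨v, hv⟩ ⟨u, hu⟩
  have hnn : ¬ p.Nil := SimpleGraph.Walk.not_nil_of_ne (fun h' => hne.symm (congrArg Subtype.val h'))
  have hadj := p.adj_snd hnn
  have := (p.getVert 1).2
  rw [SimpleGraph.comap_adj] at hadj
  exact this hadj

/-- Claim 1 in Theorem 6: if `i(H−X) ≥ 2|X|+1` for `H = G−W−e`, then `|X| ≥ r+2`. -/
theorem stmt2 {V : Type*} [Fintype V] (n r : ℕ) (G : SimpleGraph V) (hnc : G ≠ ⊤)
    (hconn : IsKConnected G (n + r + 2))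
    (hI : isolatedToughness G > ((n : ENNReal) + r + 3) / (2 * ((r : ENNReal) + 2)))
    (W : Set V) (hW : Nat.card W = n)
    (e : Sym2 ↥(Wᶜ)) (he : e ∈ (G.induce (Wᶜ : Set V)).edgeSet)
    (X : Set ↥(Wᶜ))
    (hX : 2 * Nat.card X + 1 ≤
      isolCount (((G.induce (Wᶜ : Set V)).deleteEdges {e}).induce (Xᶜ : Set ↥(Wᶜ)))) :
    r + 2 ≤ Nat.card X := by
  classical
  set H : SimpleGraph (↥(Wᶜ : Set V)) := (G.induce (Wᶜ : Set V)).deleteEdges {e} with hHdef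
  set K : SimpleGraph (↥(Xᶜ : Set ↥(Wᶜ))) := H.induce (Xᶜ : Set ↥(Wᶜ)) with hKdef
  -- The bad set: possible extra neighbor via the deleted edge e
  set T : ↥(Xᶜ : Set ↥(Wᶜ)) → Set V :=
    fun v => {w : V | ∃ hw : w ∈ (Wᶜ : Set V), s(((v : ↥(Wᶜ : Set V))), (⟨w, hw⟩ : ↥(Wᶜ : Set V))) = e} with hTdef
  have himg : ((fun x : ↥(Wᶜ : Set V) => (x : V)) '' X).ncard = Nat.card X := by
    rw [Set.ncard_image_of_injective _ Subtype.val_injective, Nat.card_coe_set_eq]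
  have key : ∀ v : ↥(Xᶜ : Set ↥(Wᶜ)), (∀ w, ¬ K.Adj v w) →
      n + r + 2 ≤ n + Nat.card X + (T v).ncard := by
    intro v hv
    have hsub : {w : V | G.Adj ((v : ↥(Wᶜ : Set V)) : V) w} ⊆
        W ∪ ((fun x : ↥(Wᶜ : Set V) => (x : V)) '' X) ∪ T v := by
      intro w hw
      by_cases hwW : w ∈ W
      · exact Or.inl (Or.inl hwW)
      · have hwWc : w ∈ (Wᶜ : Set V) := hwW
        set w' : ↥(Wᶜ : Set V) := ⟨w, hwWc⟩ with hw'
        by_cases hwX : w' ∈ X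
        · exact Or.inl (Or.inr ⟨w', hwX, rfl⟩)
        · have hwXc : w' ∈ (Xᶜ : Set ↥(Wᶜ : Set V)) := hwX
          have hnadj := hv ⟨w', hwXc⟩
          rw [hKdef, SimpleGraph.comap_adj] at hnadj
          simp only [Function.Embedding.coe_subtype, hHdef, SimpleGraph.deleteEdges_adj,
            SimpleGraph.comap_adj, Set.mem_singleton_iff, not_and, not_not] at hnadj
          exact Or.inr ⟨hwWc, hnadj hw⟩
    have hdeg := mindeg hconn ((v : ↥(Wᶜ : Set V)) : V)
    have hle := Set.ncard_le_ncard hsub (Set.toFinite _)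
    have h1 := Set.ncard_union_le (W ∪ ((fun x : ↥(Wᶜ : Set V) => (x : V)) '' X)) (T v)
    have h2 := Set.ncard_union_le W ((fun x : ↥(Wᶜ : Set V) => (x : V)) '' X)
    have hWn : W.ncard = n := by rw [← Nat.card_coe_set_eq, hW]
    omega
  -- there is at least one isolated vertex
  have hpos : 0 < isolCount K := by omega
  rw [isolCount] at hpos
  have hne : Nonempty {v : ↥(Xᶜ : Set ↥(Wᶜ)) // ∀ w, ¬ K.Adj v w} := (Nat.card_pos_iff.mp hpos).1
  obtain ⟨⟨v₀, hv₀⟩⟩ := hne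
  have hT1 : ∀ v : ↥(Xᶜ : Set ↥(Wᶜ)), (T v).ncard ≤ 1 := by
    intro v
    rw [Set.ncard_le_one_iff_eq]
    rcases Set.eq_empty_or_nonempty (T v) with h | ⟨w, hw⟩
    · exact Or.inl h
    · refine Or.inr ⟨w, Set.eq_singleton_iff_unique_mem.mpr ⟨hw, ?_⟩⟩
      intro w₂ hw₂
      obtain ⟨hm, he1⟩ := hw
      obtain ⟨hm2, he2⟩ := hw₂
      have := Sym2.congr_right.mp (he2.trans he1.symm)
      exact congrArg Subtype.val this
  -- first bound: |X| ≥ r+1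
  have hX1 : r + 1 ≤ Nat.card X := by
    have := key v₀ hv₀
    have := hT1 v₀
    omega
  -- now find an isolated vertex avoiding the endpoints of e
  obtain ⟨⟨a, b⟩, rfl⟩ := Quot.exists_rep e
  set Iso : Set ↥(Xᶜ : Set ↥(Wᶜ)) := {v | ∀ w, ¬ K.Adj v w} with hIso
  have hIso3 : 3 ≤ Iso.ncard := by
    have : isolCount K = Iso.ncard := by
      rw [isolCount, ← Nat.card_coe_set_eq]
      rfl
    omega
  set Bad : Set ↥(Xᶜ : Set ↥(Wᶜ)) := {v | (v : ↥(Wᶜ : Set V)) = a ∨ (v : ↥(Wᶜ : Set V)) = b} with hBad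
  have hBad2 : Bad.ncard ≤ 2 := by
    have hsub : Bad ⊆ {v | (v : ↥(Wᶜ : Set V)) = a} ∪ {v | (v : ↥(Wᶜ : Set V)) = b} := fun v hv => hv
    have hle := Set.ncard_le_ncard hsub (Set.toFinite _)
    have hun := Set.ncard_union_le {v : ↥(Xᶜ : Set ↥(Wᶜ)) | (v : ↥(Wᶜ : Set V)) = a}
      {v : ↥(Xᶜ : Set ↥(Wᶜ)) | (v : ↥(Wᶜ : Set V)) = b}
    have ha : {v : ↥(Xᶜ : Set ↥(Wᶜ)) | (v : ↥(Wᶜ : Set V)) = a}.ncard ≤ 1 := by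
      rw [Set.ncard_le_one_iff]
      intro x y hx hy
      exact Subtype.ext (hx.trans hy.symm)
    have hb : {v : ↥(Xᶜ : Set ↥(Wᶜ)) | (v : ↥(Wᶜ : Set V)) = b}.ncard ≤ 1 := by
      rw [Set.ncard_le_one_iff]
      intro x y hx hy
      exact Subtype.ext (hx.trans hy.symm)
    omega
  have hnotsub : ¬ Iso ⊆ Bad := by
    intro hsub
    have := Set.ncard_le_ncard hsub (Set.toFinite _)
    omega
  obtain ⟨v, hvI, hvB⟩ := Set.not_subset.mp hnotsub
  have hTv : T v = ∅ := by
    ext w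
    simp only [hTdef, Set.mem_setOf_eq, Set.mem_empty_iff_false, iff_false]
    rintro ⟨hwm, heq⟩
    have hmem : (v : ↥(Wᶜ : Set V)) ∈ (Quot.mk _ (a, b) : Sym2 ↥(Wᶜ : Set V)) := by
      rw [← heq]; exact Sym2.mem_mk_left _ _
    rw [show (Quot.mk _ (a, b) : Sym2 ↥(Wᶜ : Set V)) = s(a, b) from rfl, Sym2.mem_iff] at hmem
    exact hvB hmem
  have := key v hvI
  rw [hTv] at this
  simp only [Set.ncard_empty] at this
  omega
end

section
/- Let n ≥ r+1 ≥ 1 with r ≥ 0, and let G = K_{n+r+2} + ((2r+3)K_1 ∪ K_2) (the join of a complete graph on n+r+2 vertices with the disjoint union of 2r+3 isolated vertices and one edge). Then G is (n+r+2)-connected, I(G) = (n+r+3)/(2(r+2)), and G is not (P_{≥2},n)-factor critical avoidable. -/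
open SimpleGraph

lemma myNontriv {α : Type*} (h : 1 < Nat.card α) : Nontrivial α := by
  have hf : Finite α := (Nat.card_pos_iff.mp (by omega)).2
  cases nonempty_fintype α
  rw [Nat.card_eq_fintype_card] at h
  exact Fintype.one_lt_card_iff_nontrivial.mp h

lemma natDivLe {a b c d : ℕ} (hb : b ≠ 0) (hd : d ≠ 0) (h : a * d ≤ c * b) :
    (a : ENNReal) / b ≤ (c : ENNReal) / d := by
  have hd0 : (d : ENNReal) ≠ 0 := by exact_mod_cast hd
  have hdT : (d : ENNReal) ≠ ⊤ := ENNReal.natCast_ne_top d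
  have hb0 : (b : ENNReal) ≠ 0 := by exact_mod_cast hb
  have hbT : (b : ENNReal) ≠ ⊤ := ENNReal.natCast_ne_top b
  calc (a : ENNReal) / b = (a * d) / (b * d) := (ENNReal.mul_div_mul_right _ _ hd0 hdT).symm
    _ ≤ (c * b) / (b * d) := ENNReal.div_le_div_right (by exact_mod_cast h) _
    _ = (c * b) / (d * b) := by rw [mul_comm (b:ENNReal) d]
    _ = (c : ENNReal) / d := ENNReal.mul_div_mul_right _ _ hb0 hbT

lemma pathDegGe {m : ℕ} (hm : 2 ≤ m) (i : Fin m) : ∃ j, (pathGraph m).Adj i j := by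
  by_cases h : (i : ℕ) + 1 < m
  · exact ⟨⟨(i : ℕ) + 1, h⟩, pathGraph_adj.mpr (Or.inl rfl)⟩
  · have hi := i.isLt
    refine ⟨⟨(i : ℕ) - 1, by omega⟩, pathGraph_adj.mpr (Or.inr ?_)⟩
    simp only []
    omega

lemma pathDegLe {m : ℕ} {i x y z : Fin m} (hx : (pathGraph m).Adj i x)
    (hy : (pathGraph m).Adj i y) (hz : (pathGraph m).Adj i z) : x = y ∨ x = z ∨ y = z := by
  rw [pathGraph_adj] at hx hy hz
  simp only [← Fin.val_inj]
  omega
lemma factorDeg {V : Type*} {F : SimpleGraph V}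
    (hF : ∀ C : F.ConnectedComponent, ∃ m : ℕ, 2 ≤ m ∧
      Nonempty ((F.induce C.supp) ≃g pathGraph m)) :
    (∀ v, ∃ w, F.Adj v w) ∧
    (∀ v x y z, F.Adj v x → F.Adj v y → F.Adj v z → x = y ∨ x = z ∨ y = z) := by
  have hsupp : ∀ (v : V), v ∈ (F.connectedComponentMk v).supp := fun v => rfl
  have hmem : ∀ {v w : V}, F.Adj v w → w ∈ (F.connectedComponentMk v).supp := by
    intro v w h
    exact (ConnectedComponent.sound h.symm.reachable : F.connectedComponentMk w = _)
  constructor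
  · intro v
    obtain ⟨m, hm, ⟨φ⟩⟩ := hF (F.connectedComponentMk v)
    obtain ⟨j, hj⟩ := pathDegGe hm (φ ⟨v, hsupp v⟩)
    refine ⟨(φ.symm j : _), ?_⟩
    have : (pathGraph m).Adj (φ ⟨v, hsupp v⟩) (φ (φ.symm j)) := by
      rwa [φ.apply_symm_apply]
    exact φ.map_adj_iff.mp this
  · intro v x y z hx hy hz
    obtain ⟨m, hm, ⟨φ⟩⟩ := hF (F.connectedComponentMk v)
    have hv := hsupp v
    have key : ∀ {w : V} (hw : F.Adj v w),
        (pathGraph m).Adj (φ ⟨v, hv⟩) (φ ⟨w, hmem hw⟩) := by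
      intro w hw
      exact φ.map_adj_iff.mpr hw
    have h3 := pathDegLe (key hx) (key hy) (key hz)
    have hinj : Function.Injective φ := φ.toEquiv.injective
    rcases h3 with h | h | h
    · exact Or.inl (congrArg Subtype.val (hinj h) : x = y)
    · exact Or.inr (Or.inl (congrArg Subtype.val (hinj h) : x = z))
    · exact Or.inr (Or.inr (congrArg Subtype.val (hinj h) : y = z))

lemma partThree (n r : ℕ) (h : r + 1 ≤ n) :
    ¬ PathFactorCriticalAvoidable (graphJoin (⊤ : SimpleGraph (Fin (n + r + 2)))
      (disjUnion (⊥ : SimpleGraph (Fin (2 * r + 3))) (⊤ : SimpleGraph (Fin 2)))) 2 n := by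
  classical
  set G := graphJoin (⊤ : SimpleGraph (Fin (n + r + 2)))
      (disjUnion (⊥ : SimpleGraph (Fin (2 * r + 3))) (⊤ : SimpleGraph (Fin 2))) with hGdef
  intro hPF
  have hn : n ≤ n + r + 2 := by omega
  set f : Fin n → Fin (n + r + 2) ⊕ (Fin (2 * r + 3) ⊕ Fin 2) :=
    fun i => Sum.inl (Fin.castLE hn i) with hf
  have hfinj : Function.Injective f := by
    intro a b hab
    simp only [hf] at hab
    exact Fin.castLE_injective hn (Sum.inl_injective hab)
  set W : Set (Fin (n + r + 2) ⊕ (Fin (2 * r + 3) ⊕ Fin 2)) := Set.range f with hWdef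
  have hWcard : Nat.card W = n := by
    rw [hWdef, Nat.card_range_of_injective hfinj, Nat.card_eq_fintype_card, Fintype.card_fin]
  have hWinl : ∀ b : Fin (n + r + 2), Sum.inl b ∈ W ↔ (b : ℕ) < n := by
    intro b
    constructor
    · rintro ⟨i, hi⟩
      have : Fin.castLE hn i = b := Sum.inl_injective hi
      rw [← this]
      exact i.isLt
    · intro hb
      exact ⟨⟨(b : ℕ), hb⟩, by simp [hf, Fin.castLE]⟩
  have hWinr : ∀ p : Fin (2 * r + 3) ⊕ Fin 2, Sum.inr p ∉ W := by
    rintro p ⟨i, hi⟩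
    exact Sum.inl_ne_inr hi
  set c0 : ↥(Wᶜ) := ⟨Sum.inr (Sum.inr 0), hWinr _⟩ with hc0
  set c1 : ↥(Wᶜ) := ⟨Sum.inr (Sum.inr 1), hWinr _⟩ with hc1
  set e : Sym2 ↥(Wᶜ) := s(c0, c1) with he
  have hemem : e ∈ (G.induce (Wᶜ : Set _)).edgeSet := by
    rw [he, SimpleGraph.mem_edgeSet]
    show G.Adj (Sum.inr (Sum.inr 0)) (Sum.inr (Sum.inr 1))
    exact (by decide : (0 : Fin 2) ≠ 1)
  obtain ⟨F, hFle, hFcomp⟩ := hPF W hWcard e hemem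
  obtain ⟨hdeg1, hdeg2⟩ := factorDeg hFcomp
  choose g hg using hdeg1
  have hFadj : ∀ {u v : ↥(Wᶜ)}, F.Adj u v → G.Adj u.val v.val ∧ s(u, v) ≠ e := by
    intro u v huv
    have h2 := hFle huv
    rw [SimpleGraph.deleteEdges_adj] at h2
    exact ⟨h2.1, by simpa using h2.2⟩
  -- neighbors of inr-vertices are high inl-vertices
  have hneigh : ∀ u : ↥(Wᶜ), (∃ p, u.val = Sum.inr p) →
      ∃ b : Fin (n + r + 2), (g u).val = Sum.inl b ∧ n ≤ (b : ℕ) := by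
    rintro u ⟨p, hp⟩
    obtain ⟨hGadj, hne⟩ := hFadj (hg u)
    rcases hq : (g u).val with b | q
    · refine ⟨b, rfl, ?_⟩
      by_contra hb
      have hprop := (g u).prop
      rw [hq] at hprop
      exact hprop ((hWinl b).mpr (by omega))
    · exfalso
      rw [hp, hq] at hGadj
      rcases p with i | j <;> rcases q with i' | j'
      · exact (hGadj : False)
      · exact (hGadj : False)
      · exact (hGadj : False)
      · -- both in K2 side: must be the deleted edge
        apply hne
        rw [he]
        have hune : u ≠ g u := (hg u).ne
        have hu : u = c0 ∨ u = c1 := by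
          rcases (by omega : (j : ℕ) = 0 ∨ (j : ℕ) = 1) with h0 | h1
          · exact Or.inl (Subtype.ext (by rw [hp]; congr 2; exact Fin.ext h0))
          · exact Or.inr (Subtype.ext (by rw [hp]; congr 2; exact Fin.ext h1))
        have hv : g u = c0 ∨ g u = c1 := by
          rcases (by omega : (j' : ℕ) = 0 ∨ (j' : ℕ) = 1) with h0 | h1
          · exact Or.inl (Subtype.ext (by rw [hq]; congr 2; exact Fin.ext h0))
          · exact Or.inr (Subtype.ext (by rw [hq]; congr 2; exact Fin.ext h1))
        rcases hu with hu | hu <;> rcases hv with hv | hv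
        · exact absurd (hu.trans hv.symm) hune
        · rw [hv, hu]
        · rw [hv, hu]; exact Sym2.eq_swap
        · exact absurd (hu.trans hv.symm) hune
  -- counting argument
  set t : ↥(Wᶜ) → ℕ := fun x => Sum.elim Fin.val (fun _ => 0) x.val with ht
  set BC : Finset ↥(Wᶜ) := Finset.univ.filter (fun x => ∃ p, x.val = Sum.inr p) with hBC
  have himage : Finset.image (fun x => t (g x)) BC ⊆ Finset.Ico n (n + r + 2) := by
    intro m hm
    rw [Finset.mem_image] at hm
    obtain ⟨x, hx, rfl⟩ := hm
    rw [hBC, Finset.mem_filter] at hx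
    obtain ⟨b, hb, hnb⟩ := hneigh x hx.2
    rw [ht]
    simp only [hb, Sum.elim_inl]
    rw [Finset.mem_Ico]
    exact ⟨hnb, b.isLt⟩
  have hfib : ∀ m ∈ Finset.image (fun x => t (g x)) BC,
      (BC.filter (fun x => t (g x) = m)).card ≤ 2 := by
    intro m hm
    by_contra hcon
    push_neg at hcon
    obtain ⟨x, y, z, hxm, hym, hzm, hxy, hxz, hyz⟩ := Finset.two_lt_card_iff.mp hcon
    simp only [Finset.mem_filter, hBC] at hxm hym hzm
    have hgeq : ∀ {u v : ↥(Wᶜ)}, (∃ p, u.val = Sum.inr p) → (∃ p, v.val = Sum.inr p) →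
        t (g u) = t (g v) → g u = g v := by
      rintro u v hu hv htv
      obtain ⟨bu, hbu, _⟩ := hneigh u hu
      obtain ⟨bv, hbv, _⟩ := hneigh v hv
      rw [ht] at htv
      simp only [hbu, hbv, Sum.elim_inl] at htv
      exact Subtype.ext (by rw [hbu, hbv, Fin.ext htv])
    have h1 : g x = g y := hgeq hxm.1.2 hym.1.2 (hxm.2.trans hym.2.symm)
    have h2 : g x = g z := hgeq hxm.1.2 hzm.1.2 (hxm.2.trans hzm.2.symm)
    have hax : F.Adj (g x) x := (hg x).symm
    have hay : F.Adj (g x) y := by rw [h1]; exact (hg y).symm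
    have haz : F.Adj (g x) z := by rw [h2]; exact (hg z).symm
    rcases hdeg2 (g x) x y z hax hay haz with hh | hh | hh
    exacts [hxy hh, hxz hh, hyz hh]
  have hcount : BC.card ≤ 2 * (Finset.image (fun x => t (g x)) BC).card :=
    Finset.card_le_mul_card_image_of_maps_to (fun a ha => Finset.mem_image_of_mem _ ha) 2 hfib
  have hImCard : (Finset.image (fun x => t (g x)) BC).card ≤ r + 2 := by
    calc (Finset.image (fun x => t (g x)) BC).card ≤ (Finset.Ico n (n + r + 2)).card :=
          Finset.card_le_card himage
      _ = r + 2 := by rw [Nat.card_Ico]; omega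
  -- lower bound on BC.card
  set ι : (Fin (2 * r + 3) ⊕ Fin 2) → ↥(Wᶜ) := fun p => ⟨Sum.inr p, hWinr p⟩ with hι
  have hιinj : Function.Injective ι := by
    intro a b hab
    exact Sum.inr_injective (congrArg Subtype.val hab)
  have hBClb : 2 * r + 5 ≤ BC.card := by
    have hmap : ∀ p ∈ (Finset.univ : Finset (Fin (2 * r + 3) ⊕ Fin 2)), ι p ∈ BC := by
      intro p _
      rw [hBC, Finset.mem_filter]
      exact ⟨Finset.mem_univ _, ⟨p, rfl⟩⟩
    have := Finset.card_le_card_of_injOn ι hmap hιinj.injOn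
    simpa using this
  omega

lemma partOne (n r : ℕ) :
    IsKConnected (graphJoin (⊤ : SimpleGraph (Fin (n + r + 2)))
      (disjUnion (⊥ : SimpleGraph (Fin (2 * r + 3))) (⊤ : SimpleGraph (Fin 2)))) (n + r + 2) := by
  classical
  set G := graphJoin (⊤ : SimpleGraph (Fin (n + r + 2)))
      (disjUnion (⊥ : SimpleGraph (Fin (2 * r + 3))) (⊤ : SimpleGraph (Fin 2))) with hGdef
  constructor
  · rw [Nat.card_eq_fintype_card]
    simp only [Fintype.card_sum, Fintype.card_fin]
    omega
  · intro S hS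
    have hex : ∃ a : Fin (n + r + 2), Sum.inl a ∉ S := by
      by_contra hcon
      push_neg at hcon
      have hinj : Function.Injective (fun a : Fin (n + r + 2) => (⟨Sum.inl a, hcon a⟩ : S)) := by
        intro a b hab
        exact Sum.inl_injective (congrArg Subtype.val hab)
      have := Nat.card_le_card_of_injective _ hinj
      rw [Nat.card_eq_fintype_card (α := Fin (n + r + 2)), Fintype.card_fin] at this
      exact absurd hS (not_lt.mpr this)
    obtain ⟨a, ha⟩ := hex
    have hamem : Sum.inl a ∈ (Sᶜ : Set _) := ha
    set hub : ↥(Sᶜ) := ⟨Sum.inl a, hamem⟩ with hhub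
    have key : ∀ u : ↥(Sᶜ), u ≠ hub → (G.induce (Sᶜ : Set _)).Adj u hub := by
      rintro ⟨val, hval⟩ hu
      have hne : val ≠ Sum.inl a := by
        intro hh
        exact hu (Subtype.ext hh)
      show G.Adj val (Sum.inl a)
      rcases val with b | p
      · exact fun hba => hne (by rw [hba])
      · trivial
    rw [SimpleGraph.connected_iff]
    refine ⟨?_, ⟨hub⟩⟩
    · intro u v
      have reach : ∀ w : ↥(Sᶜ), (G.induce (Sᶜ : Set _)).Reachable w hub := by
        intro w
        by_cases hw : w = hub
        · rw [hw]
        · exact (key w hw).reachable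
      exact (reach u).trans (reach v).symm

lemma partTwo (n r : ℕ) (h : r + 1 ≤ n) :
    isolatedToughness (graphJoin (⊤ : SimpleGraph (Fin (n + r + 2)))
      (disjUnion (⊥ : SimpleGraph (Fin (2 * r + 3))) (⊤ : SimpleGraph (Fin 2))))
      = ((n : ENNReal) + r + 3) / (2 * ((r : ENNReal) + 2)) := by
  classical
  set G := graphJoin (⊤ : SimpleGraph (Fin (n + r + 2)))
      (disjUnion (⊥ : SimpleGraph (Fin (2 * r + 3))) (⊤ : SimpleGraph (Fin 2))) with hGdef
  have hval : ((n : ENNReal) + r + 3) / (2 * ((r : ENNReal) + 2))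
      = ((n + r + 3 : ℕ) : ENNReal) / ((2 * r + 4 : ℕ) : ENNReal) := by
    push_cast
    ring_nf
  rw [hval]
  -- the witness set X₀
  set ι0 : (Fin (n + r + 2) ⊕ Fin 1) → (Fin (n + r + 2) ⊕ (Fin (2 * r + 3) ⊕ Fin 2)) :=
    Sum.elim Sum.inl (fun _ => Sum.inr (Sum.inr 0)) with hι0
  have hι0inj : Function.Injective ι0 := by
    rintro (a | a) (b | b) hab
    · exact congrArg Sum.inl (Sum.inl_injective hab)
    · exact absurd hab (by simp [hι0])
    · exact absurd hab (by simp [hι0])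
    · rw [Subsingleton.elim a b]
  set X₀ : Set (Fin (n + r + 2) ⊕ (Fin (2 * r + 3) ⊕ Fin 2)) := Set.range ι0 with hX₀
  have hX₀card : Nat.card X₀ = n + r + 3 := by
    rw [hX₀, Nat.card_range_of_injective hι0inj, Nat.card_sum]
    simp [Nat.card_eq_fintype_card]
  have hmem0 : ∀ i : Fin (2 * r + 3), Sum.inr (Sum.inl i) ∈ X₀ᶜ := by
    rintro i ⟨(a | a), ha⟩
    · exact Sum.inl_ne_inr ha
    · have ha' : Sum.inr (Sum.inr (0 : Fin 2)) = Sum.inr (Sum.inl i) := ha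
      exact Sum.inl_ne_inr (Sum.inr_injective ha').symm
  have hmem1 : Sum.inr (Sum.inr (1 : Fin 2)) ∈ X₀ᶜ := by
    rintro ⟨(a | a), ha⟩
    · exact Sum.inl_ne_inr ha
    · have ha' : Sum.inr (Sum.inr (0 : Fin 2)) = Sum.inr (Sum.inr (1 : Fin 2)) := ha
      exact (by decide : (0 : Fin 2) ≠ 1) (Sum.inr_injective (Sum.inr_injective ha'))
  have hshape : ∀ x, x ∈ X₀ᶜ →
      (∃ i : Fin (2 * r + 3), x = Sum.inr (Sum.inl i)) ∨ x = Sum.inr (Sum.inr (1 : Fin 2)) := by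
    rintro (a | (i | j)) hx
    · exact absurd ⟨Sum.inl a, rfl⟩ hx
    · exact Or.inl ⟨i, rfl⟩
    · right
      have hj : j ≠ 0 := by
        intro h0
        exact hx ⟨Sum.inr 0, by rw [h0]; rfl⟩
      have : (j : ℕ) = 1 := by
        have := j.isLt
        have : (j : ℕ) ≠ 0 := fun hh => hj (Fin.ext hh)
        omega
      rw [show j = (1 : Fin 2) from Fin.ext this]
  have hallIso : ∀ v w : ↥(X₀ᶜ), ¬ (G.induce (X₀ᶜ : Set _)).Adj v w := by
    intro v w hadj
    have hadj' : G.Adj v.val w.val := hadj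
    rcases hshape v.val v.prop with ⟨i, hv⟩ | hv <;>
      rcases hshape w.val w.prop with ⟨i', hw⟩ | hw <;> rw [hv, hw] at hadj'
    · exact (hadj' : False)
    · exact (hadj' : False)
    · exact (hadj' : False)
    · exact (hadj' : (1 : Fin 2) ≠ 1) rfl
  have hX₀iso : isolCount (G.induce (X₀ᶜ : Set _)) = 2 * r + 4 := by
    unfold isolCount
    rw [Nat.card_congr (Equiv.subtypeUnivEquiv (fun v => fun w => hallIso v w))]
    have hcompl : X₀ᶜ = Set.range (Sum.elim (fun i : Fin (2 * r + 3) => Sum.inr (Sum.inl i))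
        (fun _ : Fin 1 => Sum.inr (Sum.inr (1 : Fin 2)))) := by
      ext x
      constructor
      · intro hx
        rcases hshape x hx with ⟨i, hi⟩ | hi
        · exact ⟨Sum.inl i, hi.symm⟩
        · exact ⟨Sum.inr 0, hi.symm⟩
      · rintro ⟨(i | i), hi⟩
        · rw [← hi]; exact hmem0 i
        · rw [← hi]; exact hmem1
    rw [hcompl, Nat.card_range_of_injective, Nat.card_sum]
    · simp [Nat.card_eq_fintype_card]
    · rintro (a | a) (b | b) hab <;> simp only [Sum.elim_inl, Sum.elim_inr] at hab
      · exact congrArg Sum.inl (Sum.inl_injective (Sum.inr_injective hab))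
      · exact absurd (Sum.inr_injective hab) (by simp)
      · exact absurd (Sum.inr_injective hab) (by simp)
      · rw [Subsingleton.elim a b]
  unfold isolatedToughness
  apply le_antisymm
  · refine iInf_le_of_le ⟨X₀, by rw [hX₀iso]; omega⟩ (le_of_eq ?_)
    rw [hX₀card, hX₀iso]
  · apply le_iInf
    rintro ⟨X, hX⟩
    have hX' : 2 ≤ isolCount (G.induce ((Xᶜ) : Set _)) := hX
    refine natDivLe ?_ ?_ ?_
    · omega
    · show isolCount (G.induce ((Xᶜ) : Set _)) ≠ 0
      omega
    · show (n + r + 3) * isolCount (G.induce ((Xᶜ) : Set _)) ≤ Nat.card X * (2 * r + 4)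
      clear hX
      -- every inl vertex is in X
      have hA : ∀ a : Fin (n + r + 2), Sum.inl a ∈ X := by
        intro a
        by_contra ha
        have hnt : Nontrivial {v : ↥(Xᶜ) // ∀ w, ¬ (G.induce (Xᶜ : Set _)).Adj v w} := by
          apply myNontriv
          have h2 : 2 ≤ Nat.card {v : ↥(Xᶜ) // ∀ w, ¬ (G.induce (Xᶜ : Set _)).Adj v w} := hX'
          omega
        obtain ⟨v, w, hvw⟩ := hnt
        set hub : ↥(Xᶜ) := ⟨Sum.inl a, ha⟩ with hhub
        have hpick : ∃ u : {v : ↥(Xᶜ) // ∀ w, ¬ (G.induce (Xᶜ : Set _)).Adj v w},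
            u.1 ≠ hub := by
          by_cases hv : v.1 = hub
          · refine ⟨w, fun hw => hvw (Subtype.ext ?_)⟩
            rw [hv, hw]
          · exact ⟨v, hv⟩
        obtain ⟨u, hu⟩ := hpick
        apply u.2 hub
        show G.Adj u.1.val (Sum.inl a)
        have hne : u.1.val ≠ Sum.inl a := fun hh => hu (Subtype.ext hh)
        rcases hval2 : u.1.val with b | p
        · rw [hval2] at hne
          exact fun hba => hne (by rw [hba])
        · trivial
      -- lower bounds on Nat.card X
      have hXlb : ∀ (E : Type) (ι2 : (Fin (n + r + 2) ⊕ E) → ↥X), Function.Injective ι2 →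
          Finite E → n + r + 2 + Nat.card E ≤ Nat.card X := by
        intro E ι2 hinj hE
        have := Nat.card_le_card_of_injective ι2 hinj
        rw [Nat.card_sum, Nat.card_eq_fintype_card (α := Fin (n + r + 2)), Fintype.card_fin]
          at this
        exact this
      -- shapes of isolated vertices
      set T := {v : ↥(Xᶜ) // ∀ w, ¬ (G.induce (Xᶜ : Set _)).Adj v w} with hT
      have hiso : isolCount (G.induce (Xᶜ : Set _)) = Nat.card T := rfl
      have hTshape : ∀ v : T, (∃ i : Fin (2 * r + 3), v.1.val = Sum.inr (Sum.inl i)) ∨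
          (∃ j : Fin 2, v.1.val = Sum.inr (Sum.inr j)) := by
        intro v
        rcases hv : v.1.val with a | (i | j)
        · exact absurd (hA a) (by rw [← hv]; exact v.1.prop)
        · exact Or.inl ⟨i, rfl⟩
        · exact Or.inr ⟨j, rfl⟩
      have hvalinj : ∀ v w : T, v.1.val = w.1.val → v = w := by
        intro v w hvw
        exact Subtype.ext (Subtype.ext hvw)
      -- case analysis on the two K2 vertices
      have hisoUB : ∀ (m : ℕ), (∀ (f : T → Fin m), Function.Injective f) → True := fun _ _ => trivial
      have hπ : ∀ (j₀ k₀ : Fin 2), j₀ ≠ k₀ → Sum.inr (Sum.inr j₀) ∈ X →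
          Sum.inr (Sum.inr k₀) ∉ X →
          (n + r + 3) * Nat.card T ≤ Nat.card X * (2 * r + 4) := by
        intro j₀ k₀ hjk hj₀ hk₀
        have hshapeC : ∀ v : T, (∃ i : Fin (2 * r + 3), v.1.val = Sum.inr (Sum.inl i)) ∨
            v.1.val = Sum.inr (Sum.inr k₀) := by
          intro v
          rcases hTshape v with hv | ⟨j, hv⟩
          · exact Or.inl hv
          · right
            have hmem := v.1.prop
            rw [hv] at hmem
            have hjj : j ≠ j₀ := fun hh => hmem (by rw [hh]; exact hj₀)
            have : (j : ℕ) = (k₀ : ℕ) := by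
              have h1 := j.isLt
              have h2 := j₀.isLt
              have h3 := k₀.isLt
              have h4 : (j : ℕ) ≠ (j₀ : ℕ) := fun hh => hjj (Fin.ext hh)
              have h5 : (j₀ : ℕ) ≠ (k₀ : ℕ) := fun hh => hjk (Fin.ext hh)
              omega
            rw [hv, show j = k₀ from Fin.ext this]
        set ρ : (Fin (n + r + 2) ⊕ (Fin (2 * r + 3) ⊕ Fin 2)) → (Fin (2 * r + 3) ⊕ Fin 1) :=
          Sum.elim (fun _ => Sum.inr 0) (Sum.elim Sum.inl (fun _ => Sum.inr 0)) with hρ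
        have hfinj : Function.Injective (fun v : T => ρ v.1.val) := by
          intro v w hvw
          simp only at hvw
          rcases hshapeC v with ⟨i, hi⟩ | hi <;> rcases hshapeC w with ⟨i', hi'⟩ | hi' <;>
            rw [hi, hi'] at hvw <;> simp only [hρ, Sum.elim_inl, Sum.elim_inr] at hvw
          · exact hvalinj v w (by rw [hi, hi', Sum.inl_injective hvw])
          · exact absurd hvw (by simp)
          · exact absurd hvw (by simp)
          · exact hvalinj v w (hi.trans hi'.symm)
        have hisoB : Nat.card T ≤ 2 * r + 4 := by
          have := Nat.card_le_card_of_injective _ hfinj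
          rw [Nat.card_sum, Nat.card_eq_fintype_card (α := Fin (2 * r + 3)),
            Nat.card_eq_fintype_card (α := Fin 1), Fintype.card_fin, Fintype.card_fin] at this
          omega
        have hcard : n + r + 3 ≤ Nat.card X := by
          have := hXlb (Fin 1) (Sum.elim (fun a => ⟨Sum.inl a, hA a⟩)
            (fun _ => ⟨Sum.inr (Sum.inr j₀), hj₀⟩)) ?_ inferInstance
          · rw [Nat.card_eq_fintype_card (α := Fin 1), Fintype.card_fin] at this
            omega
          · rintro (a | a) (b | b) hab <;> simp only [Sum.elim_inl, Sum.elim_inr] at hab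
            · exact congrArg Sum.inl (Sum.inl_injective (congrArg Subtype.val hab))
            · exact absurd (congrArg Subtype.val hab) (by simp)
            · exact absurd (congrArg Subtype.val hab) (by simp)
            · rw [Subsingleton.elim a b]
        calc (n + r + 3) * Nat.card T ≤ (n + r + 3) * (2 * r + 4) :=
              Nat.mul_le_mul_left _ hisoB
          _ ≤ Nat.card X * (2 * r + 4) := Nat.mul_le_mul_right _ hcard
      by_cases hc0 : Sum.inr (Sum.inr (0 : Fin 2)) ∈ X <;>
        by_cases hc1 : Sum.inr (Sum.inr (1 : Fin 2)) ∈ X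
      · -- both in X
        have hshapeC : ∀ v : T, ∃ i : Fin (2 * r + 3), v.1.val = Sum.inr (Sum.inl i) := by
          intro v
          rcases hTshape v with hv | ⟨j, hv⟩
          · exact hv
          · exfalso
            have hmem := v.1.prop
            rw [hv] at hmem
            rcases (by omega : (j : ℕ) = 0 ∨ (j : ℕ) = 1) with h0 | h1
            · exact hmem (by rw [show j = (0 : Fin 2) from Fin.ext h0]; exact hc0)
            · exact hmem (by rw [show j = (1 : Fin 2) from Fin.ext h1]; exact hc1)
        choose idx hidx using hshapeC
        have hidxinj : Function.Injective idx := by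
          intro v w hvw
          apply hvalinj
          rw [hidx v, hidx w, hvw]
        have hisoB : Nat.card T ≤ 2 * r + 3 := by
          have := Nat.card_le_card_of_injective idx hidxinj
          rwa [Nat.card_eq_fintype_card (α := Fin (2 * r + 3)), Fintype.card_fin] at this
        have hcard : n + r + 4 ≤ Nat.card X := by
          have hcboth : ∀ j : Fin 2, Sum.inr (Sum.inr j) ∈ X := by
            intro j
            rcases (by omega : (j : ℕ) = 0 ∨ (j : ℕ) = 1) with h0 | h1
            · rw [show j = (0 : Fin 2) from Fin.ext h0]; exact hc0
            · rw [show j = (1 : Fin 2) from Fin.ext h1]; exact hc1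
          have := hXlb (Fin 2) (Sum.elim (fun a => ⟨Sum.inl a, hA a⟩)
            (fun j => ⟨Sum.inr (Sum.inr j), hcboth j⟩)) ?_ inferInstance
          · rw [Nat.card_eq_fintype_card (α := Fin 2), Fintype.card_fin] at this
            omega
          · rintro (a | a) (b | b) hab <;> simp only [Sum.elim_inl, Sum.elim_inr] at hab <;>
              have hab' := congrArg Subtype.val hab
            · exact congrArg Sum.inl (Sum.inl_injective hab')
            · exact absurd hab' (by simp)
            · exact absurd hab' (by simp)
            · exact congrArg Sum.inr (Sum.inr_injective (Sum.inr_injective hab'))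
        rw [hiso]
        calc (n + r + 3) * Nat.card T ≤ (n + r + 3) * (2 * r + 3) :=
              Nat.mul_le_mul_left _ hisoB
          _ ≤ (n + r + 2) * (2 * r + 4) := by nlinarith
          _ ≤ Nat.card X * (2 * r + 4) := Nat.mul_le_mul_right _ (by omega)
      · -- c0 ∈ X, c1 ∉ X
        rw [hiso]
        exact hπ 0 1 (by decide) hc0 hc1
      · -- c0 ∉ X, c1 ∈ X
        rw [hiso]
        exact hπ 1 0 (by decide) hc1 hc0
      · -- both out of X
        have hshapeC : ∀ v : T, ∃ i : Fin (2 * r + 3), v.1.val = Sum.inr (Sum.inl i) := by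
          intro v
          rcases hTshape v with hv | ⟨j, hv⟩
          · exact hv
          · exfalso
            set j' : Fin 2 := if (j : ℕ) = 0 then 1 else 0 with hj'
            have hj'mem : Sum.inr (Sum.inr j') ∈ (Xᶜ : Set _) := by
              by_cases h0 : (j : ℕ) = 0
              · rw [hj']; simp only [h0, if_pos]; exact hc1
              · rw [hj']; simp only [h0, if_neg]; exact hc0
            apply v.2 ⟨Sum.inr (Sum.inr j'), hj'mem⟩
            show G.Adj v.1.val (Sum.inr (Sum.inr j'))
            rw [hv]
            have : j ≠ j' := by
              intro hh
              by_cases h0 : (j : ℕ) = 0 <;> rw [hj'] at hh <;> simp only [h0, if_pos, if_neg,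
                if_true, if_false] at hh
              · exact absurd (congrArg Fin.val hh) (by omega)
              · have := j.isLt
                exact absurd (congrArg Fin.val hh) (by omega)
            exact this
        choose idx hidx using hshapeC
        have hidxinj : Function.Injective idx := by
          intro v w hvw
          apply hvalinj
          rw [hidx v, hidx w, hvw]
        have hisoB : Nat.card T ≤ 2 * r + 3 := by
          have := Nat.card_le_card_of_injective idx hidxinj
          rwa [Nat.card_eq_fintype_card (α := Fin (2 * r + 3)), Fintype.card_fin] at this
        have hcard : n + r + 2 ≤ Nat.card X := by
          have hinj : Function.Injective (fun a : Fin (n + r + 2) => (⟨Sum.inl a, hA a⟩ : X)) := by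
            intro a b hab
            exact Sum.inl_injective (congrArg Subtype.val hab)
          have := Nat.card_le_card_of_injective _ hinj
          rwa [Nat.card_eq_fintype_card (α := Fin (n + r + 2)), Fintype.card_fin] at this
        rw [hiso]
        calc (n + r + 3) * Nat.card T ≤ (n + r + 3) * (2 * r + 3) :=
              Nat.mul_le_mul_left _ hisoB
          _ ≤ (n + r + 2) * (2 * r + 4) := by nlinarith
          _ ≤ Nat.card X * (2 * r + 4) := Nat.mul_le_mul_right _ hcard

/-- Remark 1: sharpness of the isolated toughness bound in Theorem 6. -/
theorem stmt3 (n r : ℕ) (h : r + 1 ≤ n)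
    (G : SimpleGraph (Fin (n + r + 2) ⊕ (Fin (2 * r + 3) ⊕ Fin 2)))
    (hG : G = graphJoin (⊤ : SimpleGraph (Fin (n + r + 2)))
      (disjUnion (⊥ : SimpleGraph (Fin (2 * r + 3))) (⊤ : SimpleGraph (Fin 2)))) :
    IsKConnected G (n + r + 2) ∧
    isolatedToughness G = ((n : ENNReal) + r + 3) / (2 * ((r : ENNReal) + 2)) ∧
    ¬ PathFactorCriticalAvoidable G 2 n := by
  subst hG
  exact ⟨partOne n r, partTwo n r h, partThree n r h⟩
end

section
/- For nonnegative integers n ≥ r, the graph G = K_{n+r+1} + ((2r+1)K_1 ∪ K_2) is (n+r+1)-connected, satisfies I(G) = (n+r+2)/(2r+2) > (n+r+3)/(2(r+2)), and is not (P_{≥2},n)-factor critical avoidable. -/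
open SimpleGraph

section AuxProofs

lemma conn_of_univ {V : Type*} (G : SimpleGraph V) (v : V) (h : ∀ w, w ≠ v → G.Adj v w) :
    G.Connected := by
  have key : ∀ a, G.Reachable v a := by
    intro a
    by_cases ha : a = v
    · rw [ha]
    · exact (h a ha).reachable
  rw [connected_iff]
  exact ⟨fun a b => (key a).symm.trans (key b), ⟨v⟩⟩

lemma pathfac_deg_le_two {V : Type*} (F : SimpleGraph V)
    (hF : ∀ C : F.ConnectedComponent, ∃ m : ℕ, 2 ≤ m ∧ Nonempty ((F.induce C.supp) ≃g pathGraph m))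
    (u w₁ w₂ w₃ : V) (h1 : F.Adj u w₁) (h2 : F.Adj u w₂) (h3 : F.Adj u w₃)
    (h12 : w₁ ≠ w₂) (h13 : w₁ ≠ w₃) (h23 : w₂ ≠ w₃) : False := by
  set C := F.connectedComponentMk u with hC
  obtain ⟨m, hm, ⟨φ⟩⟩ := hF C
  have hu : u ∈ C.supp := by simp [ConnectedComponent.mem_supp_iff, hC]
  have hw : ∀ w, F.Adj u w → w ∈ C.supp := by
    intro w hw
    simp only [ConnectedComponent.mem_supp_iff, hC]
    exact ConnectedComponent.sound hw.symm.reachable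
  have adj : ∀ (w : V) (h : F.Adj u w),
      (pathGraph m).Adj (φ ⟨u, hu⟩) (φ ⟨w, hw w h⟩) := by
    intro w h
    rw [φ.map_rel_iff]
    exact h
  have a1 := (pathGraph_adj.mp (adj w₁ h1))
  have a2 := (pathGraph_adj.mp (adj w₂ h2))
  have a3 := (pathGraph_adj.mp (adj w₃ h3))
  have e12 : (φ ⟨w₁, hw w₁ h1⟩) ≠ (φ ⟨w₂, hw w₂ h2⟩) := by
    simp only [ne_eq, EmbeddingLike.apply_eq_iff_eq, Subtype.mk.injEq]
    exact h12
  have e13 : (φ ⟨w₁, hw w₁ h1⟩) ≠ (φ ⟨w₃, hw w₃ h3⟩) := by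
    simp only [ne_eq, EmbeddingLike.apply_eq_iff_eq, Subtype.mk.injEq]
    exact h13
  have e23 : (φ ⟨w₂, hw w₂ h2⟩) ≠ (φ ⟨w₃, hw w₃ h3⟩) := by
    simp only [ne_eq, EmbeddingLike.apply_eq_iff_eq, Subtype.mk.injEq]
    exact h23
  have v12 : ((φ ⟨w₁, hw w₁ h1⟩) : Fin m).val ≠ ((φ ⟨w₂, hw w₂ h2⟩) : Fin m).val :=
    fun hv => e12 (Fin.ext hv)
  have v13 : ((φ ⟨w₁, hw w₁ h1⟩) : Fin m).val ≠ ((φ ⟨w₃, hw w₃ h3⟩) : Fin m).val :=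
    fun hv => e13 (Fin.ext hv)
  have v23 : ((φ ⟨w₂, hw w₂ h2⟩) : Fin m).val ≠ ((φ ⟨w₃, hw w₃ h3⟩) : Fin m).val :=
    fun hv => e23 (Fin.ext hv)
  omega

lemma pathfac_deg_ge_one {V : Type*} (F : SimpleGraph V)
    (hF : ∀ C : F.ConnectedComponent, ∃ m : ℕ, 2 ≤ m ∧ Nonempty ((F.induce C.supp) ≃g pathGraph m))
    (v : V) : ∃ w : V, F.Adj v w := by
  set C := F.connectedComponentMk v with hC
  obtain ⟨m, hm, ⟨φ⟩⟩ := hF C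
  have hv : v ∈ C.supp := by simp [ConnectedComponent.mem_supp_iff, hC]
  set i := φ ⟨v, hv⟩ with hi
  by_cases hlt : (i : Fin m).val + 1 < m
  · set j : Fin m := ⟨(i : Fin m).val + 1, hlt⟩ with hj
    have hadj : (pathGraph m).Adj i j := pathGraph_adj.mpr (Or.inl rfl)
    refine ⟨(φ.symm j : ↥C.supp), ?_⟩
    have := φ.symm.map_rel_iff.mpr hadj
    rw [φ.symm_apply_apply] at this
    exact this
  · have hpos : 1 ≤ (i : Fin m).val := by
      have := (i : Fin m).isLt
      omega
    set j : Fin m := ⟨(i : Fin m).val - 1, by omega⟩ with hj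
    have hadj : (pathGraph m).Adj i j := pathGraph_adj.mpr (Or.inr (by simp [hj]; omega))
    refine ⟨(φ.symm j : ↥C.supp), ?_⟩
    have := φ.symm.map_rel_iff.mpr hadj
    rw [φ.symm_apply_apply] at this
    exact this

lemma arith (n r s b c γ β x : ℕ) (hrn : r ≤ n) (h1 : s ≤ β + γ)
    (h2 : β + b = 2*r+1) (h3 : γ ≤ 1) (h4 : 1 ≤ γ → 1 ≤ c)
    (h5 : n+r+1+b+c ≤ x) : (n+r+2)*s ≤ (2*r+2)*x := by
  have hb : b ≤ 2*r+1 := by omega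
  interval_cases γ
  · have hs : s ≤ β := by omega
    calc (n+r+2)*s ≤ (n+r+2)*β := by nlinarith
    _ ≤ (2*r+2)*(n+r+1+b) := by nlinarith
    _ ≤ (2*r+2)*x := by nlinarith
  · have hc : 1 ≤ c := h4 le_rfl
    calc (n+r+2)*s ≤ (n+r+2)*(β+1) := by nlinarith
    _ ≤ (2*r+2)*(n+r+2+b) := by nlinarith
    _ ≤ (2*r+2)*x := by nlinarith

lemma ennreal_div_le (a b x s : ℕ) (hb : b ≠ 0) (hs : s ≠ 0) (h : a * s ≤ b * x) :
    (a : ENNReal) / (b : ENNReal) ≤ (x : ENNReal) / (s : ENNReal) := by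
  rw [ENNReal.div_le_iff (by exact_mod_cast hb) (ENNReal.natCast_ne_top _),
    mul_comm, ← mul_div_assoc,
    ENNReal.le_div_iff_mul_le (Or.inl (by exact_mod_cast hs)) (Or.inl (ENNReal.natCast_ne_top _)),
    ← Nat.cast_mul, ← Nat.cast_mul, Nat.cast_le]
  simpa [mul_comm] using h

section MainAux
variable (n r : ℕ)

abbrev Vt := Fin (n+r+1) ⊕ (Fin (2*r+1) ⊕ Fin 2)

abbrev Gc : SimpleGraph (Vt n r) := graphJoin (⊤ : SimpleGraph (Fin (n + r + 1)))
      (disjUnion (⊥ : SimpleGraph (Fin (2 * r + 1))) (⊤ : SimpleGraph (Fin 2)))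

lemma Gc_adj_inl (a : Fin (n+r+1)) (b : Vt n r) (h : b ≠ .inl a) : (Gc n r).Adj (.inl a) b := by
  rcases b with b | b <;> simp [graphJoin, disjUnion] <;> simp_all [Ne, eq_comm]

lemma part1 : IsKConnected (Gc n r) (n + r + 1) := by
  constructor
  · rw [Nat.card_eq_fintype_card]
    simp only [Fintype.card_sum, Fintype.card_fin]
    omega
  · intro S hS
    have hex : ∃ i : Fin (n+r+1), (Sum.inl i : Vt n r) ∉ S := by
      by_contra hc
      push_neg at hc
      have hinj : Function.Injective (fun i : Fin (n+r+1) => (⟨Sum.inl i, hc i⟩ : S)) := by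
        intro a b hab
        simpa using hab
      have hle := Nat.card_le_card_of_injective _ hinj
      rw [Nat.card_eq_fintype_card, Fintype.card_fin] at hle
      exact Nat.lt_irrefl _ (lt_of_lt_of_le hS hle)
    obtain ⟨i, hi⟩ := hex
    refine conn_of_univ _ ⟨Sum.inl i, hi⟩ ?_
    rintro ⟨w, hw⟩ hne
    have : w ≠ Sum.inl i := by
      intro h; apply hne; exact Subtype.ext h
    exact Gc_adj_inl n r i w this

lemma part3 : ((n : ENNReal) + r + 2) / (2 * (r : ENNReal) + 2) >
      ((n : ENNReal) + r + 3) / (2 * ((r : ENNReal) + 2)) := by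
  have h1 : ((n : ENNReal) + r + 2) = ((n + r + 2 : ℕ) : ENNReal) := by push_cast; ring
  have h2 : (2 * (r : ENNReal) + 2) = ((2*r + 2 : ℕ) : ENNReal) := by push_cast; ring
  have h3 : ((n : ENNReal) + r + 3) = ((n + r + 3 : ℕ) : ENNReal) := by push_cast; ring
  have h4 : (2 * ((r : ENNReal) + 2)) = ((2*r + 4 : ℕ) : ENNReal) := by push_cast; ring
  rw [h1, h2, h3, h4, gt_iff_lt,
    ENNReal.div_lt_iff (Or.inl (Nat.cast_ne_zero.mpr (by omega))) (Or.inl (ENNReal.natCast_ne_top _)),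
    mul_comm, ← mul_div_assoc,
    ENNReal.lt_div_iff_mul_lt (Or.inl (Nat.cast_ne_zero.mpr (by omega))) (Or.inl (ENNReal.natCast_ne_top _))]
  rw [← Nat.cast_mul, ← Nat.cast_mul, Nat.cast_lt]
  nlinarith

-- main counting inequality
lemma part2_key (hrn : r ≤ n) (X : Set (Vt n r))
    (hX : 2 ≤ isolCount ((Gc n r).induce (Xᶜ : Set (Vt n r)))) :
    (n+r+2) * isolCount ((Gc n r).induce (Xᶜ : Set (Vt n r))) ≤ (2*r+2) * Nat.card X := by
  classical
  set isol : ↥(Xᶜ) → Prop := fun v => ∀ w, ¬ ((Gc n r).induce (Xᶜ : Set (Vt n r))).Adj v w with hisol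
  -- all "left" vertices belong to X
  have F1 : ∀ i : Fin (n+r+1), (Sum.inl i : Vt n r) ∈ X := by
    intro i
    by_contra hi
    have hnt : Nontrivial {v : ↥(Xᶜ) // isol v} := by
      rw [← Fintype.one_lt_card_iff_nontrivial, ← Nat.card_eq_fintype_card]
      have : isolCount ((Gc n r).induce (Xᶜ : Set (Vt n r)))
          = Nat.card {v : ↥(Xᶜ) // isol v} := rfl
      omega
    obtain ⟨⟨v, hv⟩, ⟨w, hw⟩, hne⟩ := hnt
    have key : ∀ (u : ↥(Xᶜ)), isol u → (u : Vt n r) = Sum.inl i := by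
      intro u hu
      by_contra hne'
      exact hu ⟨Sum.inl i, hi⟩ ((Gc_adj_inl n r i u hne').symm)
    exact hne (Subtype.ext (Subtype.ext ((key v hv).trans (key w hw).symm)))
  -- finsets
  set bfin : Finset (Fin (2*r+1)) :=
    Finset.univ.filter (fun j => (Sum.inr (Sum.inl j) : Vt n r) ∈ X) with hbfin
  set βfin : Finset (Fin (2*r+1)) :=
    Finset.univ.filter (fun j => ¬ (Sum.inr (Sum.inl j) : Vt n r) ∈ X) with hβfin
  set cfin : Finset (Fin 2) :=
    Finset.univ.filter (fun k => (Sum.inr (Sum.inr k) : Vt n r) ∈ X) with hcfin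
  set γfin : Finset (Fin 2) :=
    Finset.univ.filter (fun k => (Sum.inr (Sum.inr k) : Vt n r) ∉ X ∧
      ∀ k', k' ≠ k → (Sum.inr (Sum.inr k') : Vt n r) ∈ X) with hγfin
  set I : Finset ↥(Xᶜ) := Finset.univ.filter isol with hI
  have hs_card : isolCount ((Gc n r).induce (Xᶜ : Set (Vt n r))) = I.card := by
    rw [hI, ← Fintype.card_subtype]
    exact Nat.card_eq_fintype_card
  -- h1 : I.card ≤ βfin.card + γfin.card
  have h1 : I.card ≤ βfin.card + γfin.card := by
    set I₁ : Finset ↥(Xᶜ) := I.filter (fun v => ∃ j, (v : Vt n r) = Sum.inr (Sum.inl j)) with hI₁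
    set I₂ : Finset ↥(Xᶜ) := I.filter (fun v => ∃ k, (v : Vt n r) = Sum.inr (Sum.inr k)) with hI₂
    have hsub : I ⊆ I₁ ∪ I₂ := by
      intro v hvI
      rcases hvc : (v : Vt n r) with i | (j | k)
      · exact absurd (F1 i) (hvc ▸ v.2)
      · exact Finset.mem_union_left _ (Finset.mem_filter.mpr ⟨hvI, j, hvc⟩)
      · exact Finset.mem_union_right _ (Finset.mem_filter.mpr ⟨hvI, k, hvc⟩)
    have hc1 : I₁.card ≤ βfin.card := by
      refine Finset.card_le_card_of_injOn
        (fun v => if h : ∃ j, (v : Vt n r) = Sum.inr (Sum.inl j) then h.choose else 0) ?_ ?_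
      · intro v hv
        rw [hI₁, Finset.mem_coe, Finset.mem_filter] at hv
        obtain ⟨hvI, hex⟩ := hv
        simp only [dif_pos hex]
        rw [Finset.mem_coe, hβfin, Finset.mem_filter]
        refine ⟨Finset.mem_univ _, ?_⟩
        rw [← hex.choose_spec]
        exact v.2
      · intro v hv w hw hvw
        simp only [Finset.coe_filter, Set.mem_setOf_eq, hI₁] at hv hw
        simp only [dif_pos hv.2, dif_pos hw.2] at hvw
        apply Subtype.ext
        rw [hv.2.choose_spec, hw.2.choose_spec, hvw]
    have hc2 : I₂.card ≤ γfin.card := by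
      refine Finset.card_le_card_of_injOn
        (fun v => if h : ∃ k, (v : Vt n r) = Sum.inr (Sum.inr k) then h.choose else 0) ?_ ?_
      · intro v hv
        rw [hI₂, Finset.mem_coe, Finset.mem_filter] at hv
        obtain ⟨hvI, hex⟩ := hv
        rw [hI, Finset.mem_filter] at hvI
        simp only [dif_pos hex]
        rw [Finset.mem_coe, hγfin, Finset.mem_filter]
        refine ⟨Finset.mem_univ _, ?_, ?_⟩
        · rw [← hex.choose_spec]; exact v.2
        · intro k' hk'
          by_contra hk'X
          apply hvI.2 ⟨Sum.inr (Sum.inr k'), hk'X⟩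
          show (Gc n r).Adj (v : Vt n r) _
          rw [hex.choose_spec]
          simp only [graphJoin, disjUnion]
          simp [Ne, eq_comm]
          intro hkk
          exact hk' (hkk ▸ rfl)
      · intro v hv w hw hvw
        simp only [Finset.coe_filter, Set.mem_setOf_eq, hI₂] at hv hw
        simp only [dif_pos hv.2, dif_pos hw.2] at hvw
        apply Subtype.ext
        rw [hv.2.choose_spec, hw.2.choose_spec, hvw]
    calc I.card ≤ (I₁ ∪ I₂).card := Finset.card_le_card hsub
    _ ≤ I₁.card + I₂.card := Finset.card_union_le _ _
    _ ≤ βfin.card + γfin.card := Nat.add_le_add hc1 hc2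
  -- h2
  have h2 : βfin.card + bfin.card = 2*r+1 := by
    have := Finset.card_filter_add_card_filter_not
      (s := (Finset.univ : Finset (Fin (2*r+1))))
      (p := fun j => (Sum.inr (Sum.inl j) : Vt n r) ∈ X)
    rw [hbfin, hβfin]
    simp only [Finset.card_univ, Fintype.card_fin] at this ⊢
    omega
  -- h3
  have h3 : γfin.card ≤ 1 := by
    rw [Finset.card_le_one]
    intro k hk k' hk'
    rw [hγfin, Finset.mem_filter] at hk hk'
    by_contra hne
    exact hk'.2.1 (hk.2.2 k' (fun h => hne h.symm))
  -- h4
  have h4 : 1 ≤ γfin.card → 1 ≤ cfin.card := by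
    intro hγ
    obtain ⟨k, hk⟩ := Finset.card_pos.mp hγ
    rw [hγfin, Finset.mem_filter] at hk
    have hne : k + 1 ≠ k := by fin_cases k <;> decide
    apply Finset.card_pos.mpr
    exact ⟨k + 1, Finset.mem_filter.mpr ⟨Finset.mem_univ _, hk.2.2 (k+1) hne⟩⟩
  -- h5
  have h5 : n+r+1+bfin.card+cfin.card ≤ Nat.card X := by
    classical
    have hXcard : Nat.card X = X.toFinset.card := by
      rw [Set.toFinset_card, Nat.card_eq_fintype_card]
    set U₀ : Finset (Vt n r) := Finset.univ.image (fun i : Fin (n+r+1) => (Sum.inl i : Vt n r)) with hU₀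
    set U₁ : Finset (Vt n r) := bfin.image (fun j => (Sum.inr (Sum.inl j) : Vt n r)) with hU₁
    set U₂ : Finset (Vt n r) := cfin.image (fun k => (Sum.inr (Sum.inr k) : Vt n r)) with hU₂
    have hc0 : U₀.card = n+r+1 := by
      rw [hU₀, Finset.card_image_of_injective _ (fun a b h => by simpa using h)]
      simp
    have hc1 : U₁.card = bfin.card :=
      Finset.card_image_of_injective _ (fun a b h => by simpa using h)
    have hc2 : U₂.card = cfin.card :=
      Finset.card_image_of_injective _ (fun a b h => by simpa using h)
    have hd01 : Disjoint U₀ U₁ := by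
      rw [Finset.disjoint_left]
      rintro a ha hb
      rw [hU₀, Finset.mem_image] at ha
      rw [hU₁, Finset.mem_image] at hb
      obtain ⟨i, -, rfl⟩ := ha
      obtain ⟨j, -, h⟩ := hb
      cases h
    have hd02 : Disjoint (U₀ ∪ U₁) U₂ := by
      rw [Finset.disjoint_left]
      rintro a ha hb
      rw [hU₂, Finset.mem_image] at hb
      obtain ⟨k, -, rfl⟩ := hb
      rw [Finset.mem_union] at ha
      rcases ha with ha | ha
      · rw [hU₀, Finset.mem_image] at ha
        obtain ⟨i, -, h⟩ := ha
        cases h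
      · rw [hU₁, Finset.mem_image] at ha
        obtain ⟨j, -, h⟩ := ha
        simp at h
    have hsub : (U₀ ∪ U₁) ∪ U₂ ⊆ X.toFinset := by
      intro a ha
      rw [Set.mem_toFinset]
      simp only [Finset.mem_union] at ha
      rcases ha with (ha | ha) | ha
      · rw [hU₀, Finset.mem_image] at ha
        obtain ⟨i, -, rfl⟩ := ha
        exact F1 i
      · rw [hU₁, Finset.mem_image] at ha
        obtain ⟨j, hj, rfl⟩ := ha
        rw [hbfin, Finset.mem_filter] at hj
        exact hj.2
      · rw [hU₂, Finset.mem_image] at ha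
        obtain ⟨k, hk, rfl⟩ := ha
        rw [hcfin, Finset.mem_filter] at hk
        exact hk.2
    have := Finset.card_le_card hsub
    rw [Finset.card_union_of_disjoint hd02, Finset.card_union_of_disjoint hd01,
      hc0, hc1, hc2] at this
    omega
  rw [hs_card]
  exact arith n r I.card bfin.card cfin.card γfin.card βfin.card (Nat.card X) hrn h1 h2 h3 h4 h5

lemma part2 (hrn : r ≤ n) :
    isolatedToughness (Gc n r) = ((n : ENNReal) + r + 2) / (2 * (r : ENNReal) + 2) := by
  classical
  have hcast : ((n : ENNReal) + r + 2) / (2 * (r : ENNReal) + 2)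
      = ((n + r + 2 : ℕ) : ENNReal) / ((2 * r + 2 : ℕ) : ENNReal) := by
    congr 1 <;> push_cast <;> ring
  set X₀ : Set (Vt n r) :=
    Set.range (Sum.inl : Fin (n+r+1) → Vt n r) ∪ {Sum.inr (Sum.inr 0)} with hX₀
  have hmemc : ∀ v : Vt n r, v ∈ X₀ᶜ ↔ ((∃ j, v = Sum.inr (Sum.inl j)) ∨ v = Sum.inr (Sum.inr 1)) := by
    intro v
    rw [hX₀]
    simp only [Set.mem_compl_iff, Set.mem_union, Set.mem_range, Set.mem_singleton_iff]
    constructor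
    · intro h
      push_neg at h
      rcases v with i | (j | k)
      · exact absurd rfl (h.1 i)
      · exact Or.inl ⟨j, rfl⟩
      · refine Or.inr ?_
        have : k ≠ 0 := fun hk => h.2 (by rw [hk])
        have : k = 1 := by omega
        rw [this]
    · rintro (⟨j, rfl⟩ | rfl) <;> simp
  have hiso_all : ∀ v : ↥(X₀ᶜ), ∀ w : ↥(X₀ᶜ),
      ¬ ((Gc n r).induce (X₀ᶜ : Set (Vt n r))).Adj v w := by
    rintro ⟨v, hv⟩ ⟨w, hw⟩ hadj
    have hadj' : (Gc n r).Adj v w := hadj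
    rw [hmemc] at hv hw
    rcases hv with ⟨j, rfl⟩ | rfl <;> rcases hw with ⟨j', rfl⟩ | rfl <;>
      simp [graphJoin, disjUnion] at hadj'
  have hisoC : isolCount ((Gc n r).induce (X₀ᶜ : Set (Vt n r))) = 2*r+2 := by
    rw [isolCount]
    rw [Nat.card_congr (Equiv.subtypeUnivEquiv hiso_all)]
    have hbij : Function.Bijective (Sum.elim
        (fun j : Fin (2*r+1) => (⟨Sum.inr (Sum.inl j), by rw [hmemc]; exact Or.inl ⟨j, rfl⟩⟩ : ↥(X₀ᶜ)))
        (fun _ : Fin 1 => (⟨Sum.inr (Sum.inr 1), by rw [hmemc]; exact Or.inr rfl⟩ : ↥(X₀ᶜ)))) := by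
      constructor
      · rintro (a | a) (b | b) hab <;> simp [Subtype.ext_iff] at hab
        · rw [hab]
        · rw [Subsingleton.elim a b]
      · rintro ⟨v, hv⟩
        rw [hmemc] at hv
        rcases hv with ⟨j, rfl⟩ | rfl
        · exact ⟨Sum.inl j, rfl⟩
        · exact ⟨Sum.inr 0, rfl⟩
    rw [← Nat.card_eq_of_bijective _ hbij]
    simp [Nat.card_eq_fintype_card]
  have hX₀card : Nat.card X₀ = n+r+2 := by
    have hbij : Function.Bijective (Sum.elim
        (fun i : Fin (n+r+1) => (⟨Sum.inl i, Or.inl ⟨i, rfl⟩⟩ : ↥X₀))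
        (fun _ : Fin 1 => (⟨Sum.inr (Sum.inr 0), Or.inr rfl⟩ : ↥X₀))) := by
      constructor
      · rintro (a | a) (b | b) hab <;> simp [Subtype.ext_iff] at hab
        · rw [hab]
        · rw [Subsingleton.elim a b]
      · rintro ⟨v, hv⟩
        rcases hv with ⟨i, rfl⟩ | hv
        · exact ⟨Sum.inl i, rfl⟩
        · rw [Set.mem_singleton_iff] at hv
          exact ⟨Sum.inr 0, by simp [hv]⟩
    rw [← Nat.card_eq_of_bijective _ hbij]
    simp [Nat.card_eq_fintype_card]
  apply le_antisymm
  · have hle := iInf_le (fun X : {X : Set (Vt n r) //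
        2 ≤ isolCount ((Gc n r).induce (Xᶜ : Set (Vt n r)))} =>
        (Nat.card X.1 : ENNReal) / (isolCount ((Gc n r).induce ((X.1)ᶜ : Set (Vt n r))) : ENNReal))
      ⟨X₀, by rw [hisoC]; omega⟩
    rw [isolatedToughness]
    refine le_trans hle ?_
    rw [hX₀card, hisoC, hcast]
  · rw [isolatedToughness, hcast]
    refine le_iInf ?_
    rintro ⟨X, hX⟩
    have key := part2_key n r hrn X hX
    exact ennreal_div_le (n+r+2) (2*r+2) (Nat.card X)
      (isolCount ((Gc n r).induce (Xᶜ : Set (Vt n r)))) (by omega) (by omega) key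

lemma part4 : ¬ PathFactorCriticalAvoidable (Gc n r) 2 n := by
  classical
  intro hPFC
  -- the deleted vertex set
  set W : Set (Vt n r) := {v | ∃ i : Fin (n+r+1), v = Sum.inl i ∧ (i : ℕ) < n} with hW
  have hWcard : Nat.card W = n := by
    have hbij : Function.Bijective
        (fun k : Fin n => (⟨Sum.inl ⟨(k : ℕ), by omega⟩, ⟨⟨(k : ℕ), by omega⟩, rfl, by simpa using k.2⟩⟩ : W)) := by
      constructor
      · intro a b hab
        simp only [Subtype.mk.injEq, Sum.inl.injEq, Fin.mk.injEq] at hab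
        exact Fin.ext hab
      · rintro ⟨v, ⟨i, rfl, hi⟩⟩
        exact ⟨⟨(i : ℕ), hi⟩, by simp⟩
    rw [← Nat.card_eq_of_bijective _ hbij]
    simp [Nat.card_eq_fintype_card]
  -- the two K₂ vertices survive
  have hv0 : (Sum.inr (Sum.inr 0) : Vt n r) ∈ Wᶜ := by
    intro hmem; obtain ⟨i, hi, _⟩ := hmem; cases hi
  have hv1 : (Sum.inr (Sum.inr 1) : Vt n r) ∈ Wᶜ := by
    intro hmem; obtain ⟨i, hi, _⟩ := hmem; cases hi
  set v0 : ↥(Wᶜ) := ⟨Sum.inr (Sum.inr 0), hv0⟩ with hv0'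
  set v1 : ↥(Wᶜ) := ⟨Sum.inr (Sum.inr 1), hv1⟩ with hv1'
  set e : Sym2 ↥(Wᶜ) := s(v0, v1) with he
  have hemem : e ∈ ((Gc n r).induce (Wᶜ : Set (Vt n r))).edgeSet := by
    rw [he, mem_edgeSet]
    show ((Gc n r).induce (Wᶜ : Set (Vt n r))).Adj v0 v1
    simp only [induce, comap_adj, Function.Embedding.coe_subtype, hv0', hv1']
    simp [graphJoin, disjUnion]
  obtain ⟨F, hFle, hFcomp⟩ := hPFC W hWcard e hemem
  -- no two "right" vertices are adjacent in F
  have hindep : ∀ v w : ↥(Wᶜ), (v : Vt n r).isRight → (w : Vt n r).isRight → ¬ F.Adj v w := by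
    intro v w hvr hwr hadj
    have hH := hFle hadj
    rw [deleteEdges_adj] at hH
    obtain ⟨hGadj, hne⟩ := hH
    have hGadj' : (Gc n r).Adj (v : Vt n r) (w : Vt n r) := hGadj
    obtain ⟨v, hv⟩ := v
    obtain ⟨w, hw⟩ := w
    rcases v with i | (j | a)
    · simp at hvr
    · rcases w with i' | (j' | b)
      · simp at hwr
      · exact hGadj'
      · exact hGadj'
    · rcases w with i' | (j' | b)
      · simp at hwr
      · exact hGadj'
      · -- both K₂ vertices : must be the deleted edge
        have hab : a ≠ b := by
          intro h; subst h; exact (Gc n r).loopless.irrefl _ hGadj'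
        apply hne
        simp only [he, Set.mem_singleton_iff, Sym2.eq_iff]
        fin_cases a <;> fin_cases b <;> simp_all [hv0', hv1', Subtype.ext_iff]
  -- each right vertex has a left F-neighbor
  have hA_exists : ∀ v : ↥(Wᶜ), (v : Vt n r).isRight →
      ∃ w : ↥(Wᶜ), F.Adj v w ∧ (w : Vt n r).isLeft := by
    intro v hv
    obtain ⟨w, hw⟩ := pathfac_deg_ge_one F hFcomp v
    refine ⟨w, hw, ?_⟩
    rcases hwc : (w : Vt n r) with x | x
    · simp
    · exact absurd hw (hindep v w hv (by simp [hwc]))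
  set f : ↥(Wᶜ) → ↥(Wᶜ) := fun v =>
    if h : ∃ w : ↥(Wᶜ), F.Adj v w ∧ (w : Vt n r).isLeft then h.choose else v with hf
  set A : Finset ↥(Wᶜ) := Finset.univ.filter (fun v => (v : Vt n r).isRight) with hA
  set B : Finset ↥(Wᶜ) := Finset.univ.filter (fun v => (v : Vt n r).isLeft) with hB
  have hfmem : ∀ v ∈ A, f v ∈ B := by
    intro v hv
    rw [hA, Finset.mem_filter] at hv
    have hex := hA_exists v hv.2
    rw [hB, Finset.mem_filter, hf]
    simp only [dif_pos hex]
    exact ⟨Finset.mem_univ _, hex.choose_spec.2⟩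
  have hfadj : ∀ v ∈ A, F.Adj v (f v) := by
    intro v hv
    rw [hA, Finset.mem_filter] at hv
    have hex := hA_exists v hv.2
    rw [hf]
    simp only [dif_pos hex]
    exact hex.choose_spec.1
  have hfiber : ∀ b ∈ B, (A.filter (fun a => f a = b)).card ≤ 2 := by
    intro b _
    by_contra hc
    push_neg at hc
    obtain ⟨a1, ha1, a2, ha2, a3, ha3, h12, h13, h23⟩ := Finset.two_lt_card.mp hc
    rw [Finset.mem_filter] at ha1 ha2 ha3
    exact pathfac_deg_le_two F hFcomp b a1 a2 a3
      (ha1.2 ▸ (hfadj a1 ha1.1).symm) (ha2.2 ▸ (hfadj a2 ha2.1).symm)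
      (ha3.2 ▸ (hfadj a3 ha3.1).symm) h12 h13 h23
  have hmain : A.card ≤ 2 * B.card :=
    Finset.card_le_mul_card_image_of_maps_to hfmem 2 hfiber
  -- |A| = 2r+3
  have hAcard : A.card = 2*r+3 := by
    have hg : ∀ x : Fin (2*r+1) ⊕ Fin 2, (Sum.inr x : Vt n r) ∈ Wᶜ := by
      intro x hmem
      obtain ⟨i, hi, _⟩ := hmem
      cases hi
    set g : Fin (2*r+1) ⊕ Fin 2 → ↥(Wᶜ) := fun x => ⟨Sum.inr x, hg x⟩ with hgdef
    have : A = Finset.univ.image g := by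
      ext v
      rw [hA, Finset.mem_filter, Finset.mem_image]
      constructor
      · rintro ⟨-, hv⟩
        rcases hvc : (v : Vt n r) with x | x
        · simp [hvc] at hv
        · exact ⟨x, Finset.mem_univ _, Subtype.ext hvc.symm⟩
      · rintro ⟨x, -, rfl⟩
        simp [hgdef]
    rw [this, Finset.card_image_of_injective _ (fun a b hab => by
      simpa [hgdef, Subtype.ext_iff] using hab)]
    simp
  -- |B| ≤ r+1
  have hBcard : B.card ≤ r+1 := by
    set β : ↥(Wᶜ) → Fin (r+1) := fun v =>
      if h : ∃ i : Fin (n+r+1), (v : Vt n r) = Sum.inl i then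
        ⟨(h.choose : ℕ) - n, by have := h.choose.isLt; omega⟩ else ⟨0, by omega⟩ with hβ
    have : B.card ≤ (Finset.univ : Finset (Fin (r+1))).card := by
      apply Finset.card_le_card_of_injOn β (fun _ _ => Finset.mem_univ _)
      intro v hv w hw hvw
      rw [hB, Finset.coe_filter] at hv hw
      simp only [Set.mem_setOf_eq] at hv hw
      have hvex : ∃ i : Fin (n+r+1), (v : Vt n r) = Sum.inl i := by
        rcases hvc : (v : Vt n r) with x | x
        · exact ⟨x, rfl⟩
        · simp [hvc] at hv
      have hwex : ∃ i : Fin (n+r+1), (w : Vt n r) = Sum.inl i := by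
        rcases hwc : (w : Vt n r) with x | x
        · exact ⟨x, rfl⟩
        · simp [hwc] at hw
      rw [hβ] at hvw
      simp only [dif_pos hvex, dif_pos hwex, Fin.mk.injEq] at hvw
      -- the chosen indices are ≥ n since v, w ∉ W
      have hvn : n ≤ (hvex.choose : ℕ) := by
        by_contra hlt
        exact v.2 ⟨hvex.choose, hvex.choose_spec, by omega⟩
      have hwn : n ≤ (hwex.choose : ℕ) := by
        by_contra hlt
        exact w.2 ⟨hwex.choose, hwex.choose_spec, by omega⟩
      have : (hvex.choose : ℕ) = (hwex.choose : ℕ) := by omega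
      have : hvex.choose = hwex.choose := Fin.ext this
      apply Subtype.ext
      rw [hvex.choose_spec, hwex.choose_spec, this]
    simpa using this
  omega

end MainAux
end AuxProofs


/-- Remark 2: sharpness of the connectivity condition in Theorem 6. -/
theorem stmt4 (n r : ℕ) (h : r ≤ n)
    (G : SimpleGraph (Fin (n + r + 1) ⊕ (Fin (2 * r + 1) ⊕ Fin 2)))
    (hG : G = graphJoin (⊤ : SimpleGraph (Fin (n + r + 1)))
      (disjUnion (⊥ : SimpleGraph (Fin (2 * r + 1))) (⊤ : SimpleGraph (Fin 2)))) :
    IsKConnected G (n + r + 1) ∧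
    isolatedToughness G = ((n : ENNReal) + r + 2) / (2 * (r : ENNReal) + 2) ∧
    ((n : ENNReal) + r + 2) / (2 * (r : ENNReal) + 2) >
      ((n : ENNReal) + r + 3) / (2 * ((r : ENNReal) + 2)) ∧
    ¬ PathFactorCriticalAvoidable G 2 n := by
  subst hG
  exact ⟨part1 n r, part2 n r h, part3 n r, part4 n r⟩
end

section
/- Let n, r be nonnegative integers, G an (n+r+2)-connected graph, W ⊆ V(G) with |W| = n, e ∈ E(G−W), and H = G−W−e. If X ⊆ V(H) satisfies sun(H−X) ≥ 2|X|+1, then |X| ≥ r+2. -/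
open SimpleGraph

private lemma reach_two {T : Type*} {J K : SimpleGraph T} (u v : T)
    (h : ∀ a b : T, K.Adj a b → ¬ J.Adj a b → a = u ∨ a = v) :
    ∀ {w t : T}, K.Walk w t → J.Reachable w t ∨ J.Reachable w u ∨ J.Reachable w v := by
  intro w t p
  induction p with
  | nil => exact Or.inl (Reachable.refl _)
  | @cons a b c hadj p ih =>
    by_cases hj : J.Adj a b
    · rcases ih with hr | hr | hr
      · exact Or.inl (hj.reachable.trans hr)
      · exact Or.inr (Or.inl (hj.reachable.trans hr))
      · exact Or.inr (Or.inr (hj.reachable.trans hr))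
    · rcases h a b hadj hj with rfl | rfl
      · exact Or.inr (Or.inl (Reachable.refl _))
      · exact Or.inr (Or.inr (Reachable.refl _))

private lemma comp_le_two {T : Type*} [Finite T] {J K : SimpleGraph T}
    (hK : K.Connected) (u v : T)
    (h : ∀ a b : T, K.Adj a b → ¬ J.Adj a b → a = u ∨ a = v) :
    Nat.card J.ConnectedComponent ≤ 2 := by
  have key : ∀ C : J.ConnectedComponent,
      C = J.connectedComponentMk u ∨ C = J.connectedComponentMk v := by
    intro C
    induction C using SimpleGraph.ConnectedComponent.ind with
    | _ w =>
      rcases reach_two u v h ((hK.preconnected w u).some) with hr | hr | hr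
      · exact Or.inl (ConnectedComponent.sound hr)
      · exact Or.inl (ConnectedComponent.sound hr)
      · exact Or.inr (ConnectedComponent.sound hr)
  have hs : Function.Surjective
      (fun b : Bool => if b then J.connectedComponentMk u else J.connectedComponentMk v) := by
    intro C
    rcases key C with h | h
    · exact ⟨true, h.symm⟩
    · exact ⟨false, h.symm⟩
  calc Nat.card J.ConnectedComponent ≤ Nat.card Bool := Nat.card_le_card_of_surjective _ hs
    _ = 2 := by simp [Nat.card_eq_fintype_card]

private lemma conn_exists_adj {T : Type*} {K : SimpleGraph T} (hK : K.Connected)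
    {a b : T} (hab : a ≠ b) : ∃ w, K.Adj a w := by
  obtain ⟨p⟩ := hK.preconnected a b
  cases p with
  | nil => exact absurd rfl hab
  | cons h _ => exact ⟨_, h⟩

private lemma exists_adj_ne {V : Type*} [Fintype V] {n r : ℕ} {G : SimpleGraph V}
    (hconn : IsKConnected G (n + r + 2)) {W : Set V} (hW : Nat.card W = n)
    (u q : ↥(Wᶜ)) (huq : u ≠ q) :
    ∃ w : ↥(Wᶜ), w ≠ q ∧ (G.induce (Wᶜ : Set V)).Adj u w := by
  classical
  set S : Set V := W ∪ {(q : V)} with hS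
  have hWn : W.ncard = n := by rw [← Nat.card_coe_set_eq]; exact hW
  have hcS : Nat.card ↥S = S.ncard := Nat.card_coe_set_eq S
  have hSle : S.ncard ≤ n + 1 := by
    have h1 : S.ncard ≤ W.ncard + ({(q : V)} : Set V).ncard := Set.ncard_union_le _ _
    rw [hWn, Set.ncard_singleton] at h1
    exact h1
  have hcard : Nat.card ↥S < n + r + 2 := by omega
  have hc := hconn.2 S hcard
  have hVbig : n + r + 2 < Nat.card V := hconn.1
  have hcompl : 1 < (Sᶜ).ncard := by
    have := Set.ncard_add_ncard_compl S
    omega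
  have hu : (u : V) ∈ Sᶜ := by
    intro hmem
    rcases hmem with hmem | hmem
    · exact u.2 hmem
    · exact huq (Subtype.ext hmem)
  obtain ⟨o, ho, hone⟩ := Set.exists_ne_of_one_lt_ncard hcompl (u : V)
  obtain ⟨w, hw⟩ := conn_exists_adj hc (a := ⟨(u : V), hu⟩) (b := ⟨o, ho⟩)
    (by intro h; exact hone (congrArg Subtype.val h).symm)
  have hwadj : G.Adj (u : V) (w : V) := hw
  have hwS : (w : V) ∈ Sᶜ := w.2
  have hwW : (w : V) ∈ Wᶜ := fun hmem => hwS (Or.inl hmem)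
  refine ⟨⟨(w : V), hwW⟩, ?_, hwadj⟩
  intro hwq
  exact hwS (Or.inr (congrArg Subtype.val hwq))

/-- Lemma 1: if `sun(H−X) ≥ 2|X|+1` for `H = G−W−e` with `G` `(n+r+2)`-connected,
then `|X| ≥ r+2`. -/
theorem stmt6 {V : Type*} [Fintype V] (n r : ℕ) (G : SimpleGraph V)
    (hconn : IsKConnected G (n + r + 2))
    (W : Set V) (hW : Nat.card W = n)
    (e : Sym2 ↥(Wᶜ)) (he : e ∈ (G.induce (Wᶜ : Set V)).edgeSet)
    (X : Set ↥(Wᶜ))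
    (hX : 2 * Nat.card X + 1 ≤
      sunCount (((G.induce (Wᶜ : Set V)).deleteEdges {e}).induce (Xᶜ : Set ↥(Wᶜ)))) :
    r + 2 ≤ Nat.card X := by
  classical
  induction e using Sym2.ind with
  | _ u v =>
  set G' : SimpleGraph ↥(Wᶜ : Set V) := G.induce (Wᶜ : Set V) with hG'
  rw [mem_edgeSet] at he
  have huv : G'.Adj u v := he
  by_contra hlt
  push_neg at hlt
  have hXle : Nat.card ↥X ≤ r + 1 := by omega
  set H : SimpleGraph ↥(Wᶜ : Set V) := G'.deleteEdges {s(u, v)} with hH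
  set J : SimpleGraph ↥(Xᶜ : Set ↥(Wᶜ : Set V)) := H.induce (Xᶜ : Set ↥(Wᶜ : Set V)) with hJ
  set K : SimpleGraph ↥(Xᶜ : Set ↥(Wᶜ : Set V)) := G'.induce (Xᶜ : Set ↥(Wᶜ : Set V)) with hK
  -- K is connected
  set S : Set V := W ∪ (Subtype.val '' X) with hS
  have hWn : W.ncard = n := by rw [← Nat.card_coe_set_eq]; exact hW
  have hXn : (Subtype.val '' X).ncard = Nat.card ↥X := by
    rw [Set.ncard_image_of_injective _ Subtype.val_injective, ← Nat.card_coe_set_eq]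
  have hScard : Nat.card ↥S < n + r + 2 := by
    have h1 : S.ncard ≤ W.ncard + (Subtype.val '' X).ncard := Set.ncard_union_le _ _
    have h2 : Nat.card ↥S = S.ncard := Nat.card_coe_set_eq S
    omega
  have hSconn := hconn.2 S hScard
  have hmemW : ∀ a : V, a ∈ Sᶜ → a ∈ Wᶜ := fun a h hm => h (Or.inl hm)
  have hmemX : ∀ (a : V) (h : a ∈ Sᶜ),
      (⟨a, hmemW a h⟩ : ↥(Wᶜ : Set V)) ∈ (Xᶜ : Set ↥(Wᶜ : Set V)) := by
    intro a h hmem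
    exact h (Or.inr ⟨_, hmem, rfl⟩)
  have hmemS : ∀ b : ↥(Wᶜ : Set V), b ∈ (Xᶜ : Set ↥(Wᶜ : Set V)) → (b : V) ∈ Sᶜ := by
    intro b hb hmem
    rcases hmem with hm | ⟨c, hc, hcv⟩
    · exact b.2 hm
    · exact hb (by rw [← Subtype.ext hcv]; exact hc)
  have hKconn : K.Connected := by
    refine (Iso.connected_iff (G := G.induce (Sᶜ : Set V)) (H := K) ?_).mp hSconn
    exact ⟨{ toFun := fun a => ⟨⟨a.1, hmemW a.1 a.2⟩, hmemX a.1 a.2⟩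
             invFun := fun b => ⟨b.1.1, hmemS b.1 b.2⟩
             left_inv := fun a => rfl
             right_inv := fun b => rfl }, Iff.rfl⟩
  haveI hne : Nonempty ↥(Xᶜ : Set ↥(Wᶜ : Set V)) := hKconn.nonempty
  -- at most two components of J
  set u' : ↥(Xᶜ : Set ↥(Wᶜ : Set V)) :=
    if h : u ∈ (Xᶜ : Set ↥(Wᶜ : Set V)) then ⟨u, h⟩ else Classical.arbitrary _ with hu'
  set v' : ↥(Xᶜ : Set ↥(Wᶜ : Set V)) :=
    if h : v ∈ (Xᶜ : Set ↥(Wᶜ : Set V)) then ⟨v, h⟩ else Classical.arbitrary _ with hv'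
  have hmiss : ∀ a b : ↥(Xᶜ : Set ↥(Wᶜ : Set V)), K.Adj a b → ¬ J.Adj a b →
      a = u' ∨ a = v' := by
    intro a b hKab hJab
    have heq : s((a : ↥(Wᶜ : Set V)), (b : ↥(Wᶜ : Set V))) = s(u, v) := by
      by_contra hne2
      apply hJab
      show H.Adj a.1 b.1
      rw [hH, deleteEdges_adj]
      exact ⟨hKab, by simpa using hne2⟩
    rw [Sym2.eq_iff] at heq
    rcases heq with ⟨hau, -⟩ | ⟨hav, -⟩
    · left
      rw [hu', dif_pos (hau ▸ a.2)]
      exact Subtype.ext hau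
    · right
      rw [hv', dif_pos (hav ▸ a.2)]
      exact Subtype.ext hav
  have hcomp2 : Nat.card J.ConnectedComponent ≤ 2 := comp_le_two hKconn u' v' hmiss
  have hsun_le : sunCount J ≤ Nat.card J.ConnectedComponent :=
    Nat.card_le_card_of_injective Subtype.val Subtype.val_injective
  have hX0 : Nat.card ↥X = 0 := by omega
  have hXe : X = ∅ := by
    rw [← Set.ncard_eq_zero (Set.toFinite X), ← Nat.card_coe_set_eq]
    exact hX0
  have hmemXc : ∀ w : ↥(Wᶜ : Set V), w ∈ (Xᶜ : Set ↥(Wᶜ : Set V)) := by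
    intro w
    rw [hXe]
    simp
  -- the pendant-vertex contradiction machine
  have hpend : ∀ c q : ↥(Wᶜ : Set V), c ≠ q → (∀ w, H.Adj c w → w = q) →
      ((c ≠ u ∧ c ≠ v) ∨ s(c, q) = s(u, v)) → False := by
    intro c q hcq hp hside
    have hG'only : ∀ w, G'.Adj c w → w = q := by
      intro w hw
      by_cases hedge : s(c, w) = s(u, v)
      · rcases hside with ⟨hcu, hcv⟩ | hcq2
        · rw [Sym2.eq_iff] at hedge
          rcases hedge with ⟨rfl, -⟩ | ⟨rfl, -⟩
          · exact absurd rfl hcu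
          · exact absurd rfl hcv
        · rw [← hcq2, Sym2.eq_iff] at hedge
          rcases hedge with ⟨-, rfl⟩ | ⟨hcq', -⟩
          · rfl
          · exact absurd hcq' hcq
      · apply hp
        rw [hH, deleteEdges_adj]
        exact ⟨hw, by simpa using hedge⟩
    obtain ⟨w, hwq, hadj⟩ := exists_adj_ne hconn hW c q hcq
    exact hwq (hG'only w hadj)
  -- extract a sun component
  have hsne : sunCount J ≠ 0 := by omega
  have hnonempty : Nonempty {C : J.ConnectedComponent // IsSunGraph (J.induce C.supp)} := by
    unfold sunCount at hsne
    exact (Nat.card_ne_zero.mp hsne).1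
  obtain ⟨⟨C, hC⟩⟩ := hnonempty
  have hsupp : ∀ a b : ↥(Xᶜ : Set ↥(Wᶜ : Set V)), a ∈ C.supp → J.Adj a b → b ∈ C.supp := by
    intro a b ha hab
    rw [ConnectedComponent.mem_supp_iff] at ha ⊢
    rw [← ha]
    exact ConnectedComponent.sound hab.symm.reachable
  rcases hC with h1 | h2 | h3
  · -- K₁ component
    obtain ⟨c0, hc0⟩ := Nat.card_eq_one_iff_exists.mp h1
    have hiso : ∀ w : ↥(Wᶜ : Set V), ¬ H.Adj c0.1.1 w := by
      intro w hw
      have hJ' : J.Adj c0.1 ⟨w, hmemXc w⟩ := hw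
      have hin : (⟨w, hmemXc w⟩ : ↥(Xᶜ : Set ↥(Wᶜ : Set V))) ∈ C.supp :=
        hsupp c0.1 _ c0.2 hJ'
      have hww : w = c0.1.1 := congrArg (fun x => x.1.1) (hc0 ⟨⟨w, hmemXc w⟩, hin⟩)
      rw [hww] at hw
      exact H.irrefl hw
    by_cases hcu : c0.1.1 = u
    · refine hpend c0.1.1 v ?_ (fun w hw => absurd hw (hiso w)) (Or.inr ?_)
      · rw [hcu]; exact huv.ne
      · rw [hcu]
    · by_cases hcv : c0.1.1 = v
      · refine hpend c0.1.1 u ?_ (fun w hw => absurd hw (hiso w)) (Or.inr ?_)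
        · rw [hcv]; exact huv.ne'
        · rw [hcv, Sym2.eq_swap]
      · exact hpend c0.1.1 u hcu (fun w hw => absurd hw (hiso w)) (Or.inl ⟨hcu, hcv⟩)
  · -- K₂ component
    obtain ⟨h2card, -⟩ := h2
    obtain ⟨a0, b0, hab, huniv⟩ := Nat.card_eq_two_iff.mp h2card
    have hall : ∀ x : ↥C.supp, x = a0 ∨ x = b0 := by
      intro x
      have hx : x ∈ ({a0, b0} : Set ↥C.supp) := huniv ▸ Set.mem_univ x
      simpa using hx
    have hcd : a0.1.1 ≠ b0.1.1 := fun h => hab (Subtype.ext (Subtype.ext h))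
    have hpc : ∀ (x0 y0 : ↥C.supp), (∀ z : ↥C.supp, z = x0 ∨ z = y0) →
        ∀ w, H.Adj x0.1.1 w → w = y0.1.1 := by
      intro x0 y0 hall' w hw
      have hJ' : J.Adj x0.1 ⟨w, hmemXc w⟩ := hw
      have hin : (⟨w, hmemXc w⟩ : ↥(Xᶜ : Set ↥(Wᶜ : Set V))) ∈ C.supp :=
        hsupp x0.1 _ x0.2 hJ'
      rcases hall' ⟨_, hin⟩ with h | h
      · have hww : w = x0.1.1 := congrArg (fun x => x.1.1) h
        rw [hww] at hw
        exact absurd hw (H.irrefl)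
      · exact congrArg (fun x => x.1.1) h
    have hpa : ∀ w, H.Adj a0.1.1 w → w = b0.1.1 := hpc a0 b0 hall
    have hpb : ∀ w, H.Adj b0.1.1 w → w = a0.1.1 := by
      refine hpc b0 a0 ?_
      intro z
      exact (hall z).symm
    by_cases hcuv : a0.1.1 ≠ u ∧ a0.1.1 ≠ v
    · exact hpend a0.1.1 b0.1.1 hcd hpa (Or.inl hcuv)
    · by_cases hduv : b0.1.1 ≠ u ∧ b0.1.1 ≠ v
      · exact hpend b0.1.1 a0.1.1 (Ne.symm hcd) hpb (Or.inl hduv)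
      · have hc' : a0.1.1 = u ∨ a0.1.1 = v := by
          rcases not_and_or.mp hcuv with h | h
          · exact Or.inl (not_not.mp h)
          · exact Or.inr (not_not.mp h)
        have hd' : b0.1.1 = u ∨ b0.1.1 = v := by
          rcases not_and_or.mp hduv with h | h
          · exact Or.inl (not_not.mp h)
          · exact Or.inr (not_not.mp h)
        refine hpend a0.1.1 b0.1.1 hcd hpa (Or.inr ?_)
        rcases hc' with h1' | h1' <;> rcases hd' with h2' | h2'
        · exact absurd (h1'.trans h2'.symm) hcd
        · rw [h1', h2']
        · rw [h1', h2', Sym2.eq_swap]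
        · exact absurd (h1'.trans h2'.symm) hcd
  · -- corona component
    obtain ⟨S', h3card, -, z, hz⟩ := h3
    have hcards : 3 ≤ Nat.card ↥(S'ᶜ) := le_trans h3card (le_of_eq (Nat.card_congr z))
    have hpick : ∃ p : ↥(S'ᶜ), p.1.1.1 ≠ u ∧ p.1.1.1 ≠ v := by
      by_contra hno
      push_neg at hno
      have hmem2 : ∀ p : ↥(S'ᶜ), p.1.1.1 ∈ ({u, v} : Set ↥(Wᶜ : Set V)) := by
        intro p
        by_cases h : p.1.1.1 = u
        · exact Or.inl h
        · exact Or.inr (hno p h)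
      have hle2 : Nat.card ↥(S'ᶜ) ≤ Nat.card ↥({u, v} : Set ↥(Wᶜ : Set V)) :=
        Nat.card_le_card_of_injective (fun p => ⟨p.1.1.1, hmem2 p⟩)
          (by
            intro p p' h
            simp only [Subtype.mk.injEq] at h
            exact Subtype.ext (Subtype.ext (Subtype.ext h)))
      have hle3 : Nat.card ↥({u, v} : Set ↥(Wᶜ : Set V)) ≤ 2 := by
        rw [Nat.card_coe_set_eq]
        exact le_trans (Set.ncard_insert_le _ _) (by simp)
      omega
    obtain ⟨p, hpu, hpv⟩ := hpick
    have hzy : (z (z.symm p) : ↥(S'ᶜ)) = p := z.apply_symm_apply p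
    set y : ↥S' := z.symm p with hy
    have hcq : p.1.1.1 ≠ y.1.1.1 := by
      intro h
      have hpy : (p : ↥C.supp) = (y : ↥C.supp) := Subtype.ext (Subtype.ext h)
      exact p.2 (by rw [hpy]; exact y.2)
    have hpc : ∀ w, H.Adj p.1.1.1 w → w = y.1.1.1 := by
      intro w hw
      have hJ' : J.Adj (p : ↥C.supp).1 ⟨w, hmemXc w⟩ := hw
      have hin : (⟨w, hmemXc w⟩ : ↥(Xᶜ : Set ↥(Wᶜ : Set V))) ∈ C.supp :=
        hsupp (p : ↥C.supp).1 _ (p : ↥C.supp).2 hJ'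
      have hadj2 : (J.induce C.supp).Adj (p : ↥C.supp) ⟨⟨w, hmemXc w⟩, hin⟩ := hJ'
      rw [← hzy] at hadj2
      have hwy := (hz y ⟨⟨w, hmemXc w⟩, hin⟩).mp hadj2
      exact congrArg (fun x => x.1.1) hwy
    exact hpend p.1.1.1 y.1.1.1 hcq hpc (Or.inl ⟨hpu, hpv⟩)
end

section
/- For nonnegative integers n, r, the graph G = K_{n+r+2} + ((2r+3)K_1 ∪ K_2) is (n+r+2)-connected, has toughness t(G) = (n+r+2)/(2(r+2)), and is not (P_{≥3},n)-factor critical avoidable. -/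
open SimpleGraph

section Helpers
variable (n r : ℕ)

abbrev Vtx := Fin (n + r + 2) ⊕ (Fin (2 * r + 3) ⊕ Fin 2)

abbrev Gr : SimpleGraph (Vtx n r) :=
  graphJoin (⊤ : SimpleGraph (Fin (n + r + 2)))
    (disjUnion (⊥ : SimpleGraph (Fin (2 * r + 3))) (⊤ : SimpleGraph (Fin 2)))

variable {n r}

@[simp] lemma gr_adj_ll {a b : Fin (n+r+2)} : (Gr n r).Adj (Sum.inl a) (Sum.inl b) ↔ a ≠ b := by
  simp [Gr, graphJoin]
@[simp] lemma gr_adj_lr {a : Fin (n+r+2)} {x} : (Gr n r).Adj (Sum.inl a) (Sum.inr x) := by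
  simp [Gr, graphJoin]
@[simp] lemma gr_adj_rl {a : Fin (n+r+2)} {x} : (Gr n r).Adj (Sum.inr x) (Sum.inl a) := by
  simp [Gr, graphJoin]
@[simp] lemma gr_adj_rll {a b : Fin (2*r+3)} :
    ¬ (Gr n r).Adj (Sum.inr (Sum.inl a)) (Sum.inr (Sum.inl b)) := by
  simp [Gr, graphJoin, disjUnion]
@[simp] lemma gr_adj_rlr {a : Fin (2*r+3)} {b : Fin 2} :
    ¬ (Gr n r).Adj (Sum.inr (Sum.inl a)) (Sum.inr (Sum.inr b)) := by
  simp [Gr, graphJoin, disjUnion]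
@[simp] lemma gr_adj_rrl {a : Fin (2*r+3)} {b : Fin 2} :
    ¬ (Gr n r).Adj (Sum.inr (Sum.inr b)) (Sum.inr (Sum.inl a)) := by
  simp [Gr, graphJoin, disjUnion]
@[simp] lemma gr_adj_rrr {a b : Fin 2} :
    (Gr n r).Adj (Sum.inr (Sum.inr a)) (Sum.inr (Sum.inr b)) ↔ a ≠ b := by
  simp [Gr, graphJoin, disjUnion]

lemma compCount_of_connected {V : Type*} (G : SimpleGraph V) (h : G.Connected) :
    compCount G = 1 := by
  have hne : Nonempty V := h.nonempty
  rw [compCount, Nat.card_eq_one_iff_unique]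
  refine ⟨⟨fun C D => ?_⟩, ⟨G.connectedComponentMk hne.some⟩⟩
  refine C.ind fun u => D.ind fun v => ?_
  exact ConnectedComponent.eq.2 (h.preconnected u v)

lemma connected_of_universal {V : Type*} [Nonempty V] (G : SimpleGraph V)
    (u : V) (h : ∀ v, v ≠ u → G.Adj u v) : G.Connected := by
  refine ⟨fun a b => ?_⟩
  have key : ∀ v, G.Reachable u v := fun v => by
    by_cases hv : v = u
    · subst hv; rfl
    · exact (h v hv).reachable
  exact (key a).symm.trans (key b)

lemma indep_path {m : ℕ} (I : Finset (Fin m))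
    (h : ∀ i ∈ I, ∀ j ∈ I, ¬ (pathGraph m).Adj i j) : 2 * I.card ≤ m + 1 := by
  have : I.card ≤ (Finset.range ((m+1)/2)).card := by
    refine Finset.card_le_card_of_injOn (fun i => (i : ℕ) / 2)
      (fun x hx => ?_) (fun i hi j hj hij => ?_)
    · have := x.isLt; simp only [Finset.coe_range, Set.mem_Iio, Finset.mem_coe, Finset.mem_range]; omega
    · by_contra hne
      have hv : ((i:ℕ)) ≠ (j:ℕ) := fun hc => hne (Fin.ext hc)
      have : (i:ℕ) + 1 = j ∨ (j:ℕ) + 1 = i := by simp only at hij; omega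
      exact h i hi j hj (pathGraph_adj.2 this)
  rw [Finset.card_range] at this
  omega

/-- removing a set missing some left vertex keeps the graph connected. -/
lemma gr_induce_connected (S : Set (Vtx n r)) (a : Fin (n+r+2)) (ha : Sum.inl a ∉ S) :
    ((Gr n r).induce (Sᶜ : Set (Vtx n r))).Connected := by
  haveI : Nonempty ↥(Sᶜ : Set (Vtx n r)) := ⟨⟨Sum.inl a, ha⟩⟩
  refine connected_of_universal _ ⟨Sum.inl a, ha⟩ (fun v hv => ?_)
  have hval : v.1 ≠ Sum.inl a := fun hc => hv (Subtype.ext hc)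
  show (Gr n r).Adj (Sum.inl a) v.1
  match hvv : v.1 with
  | Sum.inl b =>
    refine gr_adj_ll.2 fun hab => ?_
    rw [hvv] at hval; exact hval (by rw [hab])
  | Sum.inr x => exact gr_adj_lr

/-- label map used to count components after deleting all the left vertices. -/
def glab : Vtx n r → (Fin (2*r+3) ⊕ Unit)
  | Sum.inl _ => Sum.inr ()
  | Sum.inr (Sum.inl a) => Sum.inl a
  | Sum.inr (Sum.inr _) => Sum.inr ()

lemma glab_adj_eq {X : Set (Vtx n r)} (hX : ∀ a : Fin (n+r+2), Sum.inl a ∈ X)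
    {u v : ↥(Xᶜ : Set (Vtx n r))} (h : ((Gr n r).induce Xᶜ).Adj u v) :
    glab u.1 = glab v.1 := by
  have hadj : (Gr n r).Adj u.1 v.1 := h
  match hu : u.1, hv : v.1 with
  | Sum.inl a, _ => exact absurd (hu ▸ u.2) (by simp [hX a])
  | _, Sum.inl a => exact absurd (hv ▸ v.2) (by simp [hX a])
  | Sum.inr (Sum.inl a), Sum.inr (Sum.inl b) => rw [hu, hv] at hadj; exact absurd hadj gr_adj_rll
  | Sum.inr (Sum.inl a), Sum.inr (Sum.inr b) => rw [hu, hv] at hadj; exact absurd hadj gr_adj_rlr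
  | Sum.inr (Sum.inr a), Sum.inr (Sum.inl b) => rw [hu, hv] at hadj; exact absurd hadj gr_adj_rrl
  | Sum.inr (Sum.inr a), Sum.inr (Sum.inr b) => rfl

/-- component labelling. -/
noncomputable def compMap (X : Set (Vtx n r)) (hX : ∀ a : Fin (n+r+2), Sum.inl a ∈ X) :
    ((Gr n r).induce (Xᶜ : Set (Vtx n r))).ConnectedComponent → (Fin (2*r+3) ⊕ Unit) :=
  ConnectedComponent.lift (fun v => glab v.1) (by
    intro v w p hp
    clear hp
    induction p with
    | nil => rfl
    | cons h p ih => exact (glab_adj_eq hX h).trans ih)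

lemma compMap_injective (X : Set (Vtx n r)) (hX : ∀ a : Fin (n+r+2), Sum.inl a ∈ X) :
    Function.Injective (compMap X hX) := by
  intro C D
  refine C.ind fun u => D.ind fun v => ?_
  intro huv
  simp only [compMap, ConnectedComponent.lift_mk] at huv
  refine ConnectedComponent.eq.2 ?_
  match hu : u.1, hv : v.1 with
  | Sum.inl a, _ => exact absurd (hu ▸ u.2) (by simp [hX a])
  | _, Sum.inl a => exact absurd (hv ▸ v.2) (by simp [hX a])
  | Sum.inr (Sum.inl a), Sum.inr (Sum.inl b) =>
    rw [hu, hv] at huv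
    simp only [glab, Sum.inl.injEq] at huv
    have : u = v := Subtype.ext (by rw [hu, hv, huv])
    rw [this]
  | Sum.inr (Sum.inl a), Sum.inr (Sum.inr b) => rw [hu, hv] at huv; simp [glab] at huv
  | Sum.inr (Sum.inr a), Sum.inr (Sum.inl b) => rw [hu, hv] at huv; simp [glab] at huv
  | Sum.inr (Sum.inr a), Sum.inr (Sum.inr b) =>
    by_cases hab : a = b
    · have : u = v := Subtype.ext (by rw [hu, hv, hab])
      rw [this]
    · refine Adj.reachable ?_
      show (Gr n r).Adj u.1 v.1
      rw [hu, hv]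
      exact gr_adj_rrr.2 hab

lemma compCount_le_of_subset (X : Set (Vtx n r)) (hX : ∀ a : Fin (n+r+2), Sum.inl a ∈ X) :
    compCount ((Gr n r).induce (Xᶜ : Set (Vtx n r))) ≤ 2*r+4 := by
  have := Nat.card_le_card_of_injective _ (compMap_injective X hX)
  rw [compCount]
  refine le_trans this ?_
  simp [Nat.card_eq_fintype_card]

lemma card_ge_of_subset (X : Set (Vtx n r)) (hX : ∀ a : Fin (n+r+2), Sum.inl a ∈ X) :
    n + r + 2 ≤ Nat.card X := by
  have hsub : Set.range (Sum.inl : Fin (n+r+2) → Vtx n r) ⊆ X := by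
    rintro x ⟨a, rfl⟩; exact hX a
  have h1 : Nat.card (Set.range (Sum.inl : Fin (n+r+2) → Vtx n r)) = n + r + 2 := by
    rw [Nat.card_range_of_injective Sum.inl_injective]
    simp
  calc n + r + 2 = (Set.range (Sum.inl : Fin (n+r+2) → Vtx n r)).ncard := by
        rw [← Nat.card_coe_set_eq, h1]
    _ ≤ X.ncard := Set.ncard_le_ncard hsub (Set.toFinite X)
    _ = Nat.card X := (Nat.card_coe_set_eq X).symm

abbrev Lset : Set (Vtx n r) := Set.range (Sum.inl : Fin (n+r+2) → Vtx n r)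

lemma mem_Lset_iff (x : Vtx n r) : x ∈ (Lset : Set (Vtx n r)) ↔ x.isLeft := by
  cases x <;> simp [Lset]

lemma compCount_Lc : compCount ((Gr n r).induce ((Lset)ᶜ : Set (Vtx n r))) = 2*r+4 := by
  have hX : ∀ a : Fin (n+r+2), Sum.inl a ∈ (Lset : Set (Vtx n r)) := fun a => ⟨a, rfl⟩
  have hmem : ∀ x : Fin (2*r+3) ⊕ Fin 2, Sum.inr x ∈ ((Lset)ᶜ : Set (Vtx n r)) := by
    intro x; simp [Lset]
  have hbij : Function.Bijective (compMap (n := n) (r := r) Lset hX) := by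
    refine ⟨compMap_injective _ hX, ?_⟩
    rintro (a | ⟨⟩)
    · exact ⟨(SimpleGraph.connectedComponentMk _ ⟨Sum.inr (Sum.inl a), hmem _⟩), rfl⟩
    · exact ⟨(SimpleGraph.connectedComponentMk _ ⟨Sum.inr (Sum.inr 0), hmem _⟩), rfl⟩
  have := Nat.card_eq_of_bijective _ hbij
  rw [compCount, this]
  simp [Nat.card_eq_fintype_card]

lemma card_Lset : Nat.card (Lset : Set (Vtx n r)) = n + r + 2 := by
  rw [Nat.card_range_of_injective Sum.inl_injective]; simp

lemma toughness_Gr :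
    toughness (Gr n r) = ((n : ENNReal) + r + 2) / (2 * ((r : ENNReal) + 2)) := by
  have hnum : (((n+r+2 : ℕ)) : ENNReal) = (n : ENNReal) + r + 2 := by push_cast; ring
  have hden : (((2*r+4 : ℕ)) : ENNReal) = 2 * ((r : ENNReal) + 2) := by push_cast; ring
  rw [← hnum, ← hden]
  apply le_antisymm
  · have h2 : 2 ≤ compCount ((Gr n r).induce ((Lset)ᶜ : Set (Vtx n r))) := by
      rw [compCount_Lc]; omega
    refine le_trans (iInf_le _ ⟨Lset, h2⟩) ?_
    rw [card_Lset, compCount_Lc]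
  · refine le_iInf fun ⟨X, hX2⟩ => ?_
    have hXL : ∀ a : Fin (n+r+2), Sum.inl a ∈ X := by
      by_contra hc
      push_neg at hc
      obtain ⟨a, ha⟩ := hc
      have := compCount_of_connected _ (gr_induce_connected X a ha)
      omega
    exact ENNReal.div_le_div (Nat.cast_le.2 (card_ge_of_subset X hXL))
      (Nat.cast_le.2 (compCount_le_of_subset X hXL))

lemma isKConnected_Gr : IsKConnected (Gr n r) (n+r+2) := by
  constructor
  · simp only [Nat.card_eq_fintype_card]
    simp
  · intro S hS
    have : ∃ a : Fin (n+r+2), Sum.inl a ∉ S := by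
      by_contra hc
      push_neg at hc
      have := card_ge_of_subset S hc
      omega
    obtain ⟨a, ha⟩ := this
    exact gr_induce_connected S a ha

section Part3
variable {n r : ℕ}

abbrev Wset (n r : ℕ) : Set (Vtx n r) :=
  Set.range (fun i : Fin n => (Sum.inl (Fin.castLE (by omega) i) : Vtx n r))

lemma card_Wset : Nat.card (Wset n r) = n := by
  rw [Nat.card_range_of_injective (f := fun i : Fin n => (Sum.inl (Fin.castLE (by omega) i) : Vtx n r))
    (fun i j h => Fin.castLE_injective _ (Sum.inl_injective h))]
  simp

lemma inr_mem_Wc (x : Fin (2*r+3) ⊕ Fin 2) : Sum.inr x ∈ ((Wset n r)ᶜ : Set (Vtx n r)) := by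
  rintro ⟨i, hi⟩
  simp at hi

lemma not_avoidable : ¬ PathFactorCriticalAvoidable (Gr n r) 3 n := by
  classical
  intro h
  set W := Wset n r with hWdef
  let u0 : ↥(Wᶜ : Set (Vtx n r)) := ⟨Sum.inr (Sum.inr 0), inr_mem_Wc _⟩
  let v0 : ↥(Wᶜ : Set (Vtx n r)) := ⟨Sum.inr (Sum.inr 1), inr_mem_Wc _⟩
  have he : s(u0, v0) ∈ ((Gr n r).induce (Wᶜ : Set (Vtx n r))).edgeSet := by
    rw [SimpleGraph.mem_edgeSet]
    show (Gr n r).Adj u0.1 v0.1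
    exact gr_adj_rrr.2 (by decide)
  obtain ⟨F, hFle, hcomp⟩ := h W card_Wset _ he
  haveI : Fintype ↥(Wᶜ : Set (Vtx n r)) := Fintype.ofFinite _
  haveI : Fintype F.ConnectedComponent := Fintype.ofFinite _
  -- total cardinality
  have hVcard : Fintype.card ↥(Wᶜ : Set (Vtx n r)) = 3*r+7 := by
    have h1 := Set.ncard_add_ncard_compl (W : Set (Vtx n r))
    have h2 : Nat.card (Vtx n r) = n+3*r+7 := by
      simp only [Nat.card_eq_fintype_card, Fintype.card_sum, Fintype.card_fin]; omega
    have h3 : W.ncard = n := by rw [← Nat.card_coe_set_eq, card_Wset]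
    have h4 : (Wᶜ : Set (Vtx n r)).ncard = Fintype.card ↥(Wᶜ : Set (Vtx n r)) := by
      rw [← Nat.card_coe_set_eq, Nat.card_eq_fintype_card]
    omega
  set P : Finset ↥(Wᶜ : Set (Vtx n r)) := Finset.univ.filter (fun v => v.1.isRight) with hPdef
  set Q : Finset ↥(Wᶜ : Set (Vtx n r)) := Finset.univ.filter (fun v => ¬ v.1.isRight) with hQdef
  have hPQ : P.card + Q.card = 3*r+7 := by
    rw [← hVcard, ← Finset.card_univ]
    exact Finset.card_filter_add_card_filter_not _
  have hPcard : P.card = 2*r+5 := by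
    have hb : (Finset.univ : Finset (Fin (2*r+3) ⊕ Fin 2)).card = P.card := by
      refine Finset.card_bij (fun x _ => (⟨Sum.inr x, inr_mem_Wc x⟩ : ↥(Wᶜ : Set (Vtx n r))))
        ?_ ?_ ?_
      · intro x _; simp [hPdef]
      · intro x _ y _ hxy
        exact Sum.inr_injective (congrArg Subtype.val hxy)
      · intro v hv
        have hvr : v.1.isRight := by simpa [hPdef] using hv
        obtain ⟨x, hx⟩ : ∃ x, v.1 = Sum.inr x := by
          match hvv : v.1 with
          | Sum.inl a => rw [hvv] at hvr; simp at hvr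
          | Sum.inr x => exact ⟨x, rfl⟩
        exact ⟨x, Finset.mem_univ _, Subtype.ext hx.symm⟩
    rw [← hb]
    simp only [Finset.card_univ, Fintype.card_sum, Fintype.card_fin]
  have hQcard : Q.card = r+2 := by omega
  -- independence of P in F
  have hPind : ∀ u ∈ P, ∀ v ∈ P, ¬ F.Adj u v := by
    intro u hu v hv hadj
    have hH := hFle hadj
    rw [SimpleGraph.deleteEdges_adj] at hH
    obtain ⟨hadj', hne⟩ := hH
    have hur : u.1.isRight := by simpa [hPdef] using hu
    have hvr : v.1.isRight := by simpa [hPdef] using hv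
    obtain ⟨x, hx⟩ : ∃ x, u.1 = Sum.inr x := by
      match hvv : u.1 with
      | Sum.inl a => rw [hvv] at hur; simp at hur
      | Sum.inr x => exact ⟨x, rfl⟩
    obtain ⟨y, hy⟩ : ∃ y, v.1 = Sum.inr y := by
      match hvv : v.1 with
      | Sum.inl a => rw [hvv] at hvr; simp at hvr
      | Sum.inr y => exact ⟨y, rfl⟩
    have hadjG : (Gr n r).Adj u.1 v.1 := hadj'
    rw [hx, hy] at hadjG
    match x, y with
    | Sum.inl a, Sum.inl b => exact gr_adj_rll hadjG
    | Sum.inl a, Sum.inr b => exact gr_adj_rlr hadjG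
    | Sum.inr a, Sum.inl b => exact gr_adj_rrl hadjG
    | Sum.inr a, Sum.inr b =>
      have hab : a ≠ b := gr_adj_rrr.1 hadjG
      apply hne
      simp only [Set.mem_singleton_iff]
      have hcase : (a = 0 ∧ b = 1) ∨ (a = 1 ∧ b = 0) := by omega
      rcases hcase with ⟨ha, hb⟩ | ⟨ha, hb⟩
      · have hu0 : u = u0 := Subtype.ext (by rw [hx, ha])
        have hv0 : v = v0 := Subtype.ext (by rw [hy, hb])
        rw [hu0, hv0]
      · have hu0 : u = v0 := Subtype.ext (by rw [hx, ha])
        have hv0 : v = u0 := Subtype.ext (by rw [hy, hb])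
        rw [hu0, hv0, Sym2.eq_swap]
  -- per-component bounds
  have hcompbound : ∀ C : F.ConnectedComponent,
      (P.filter (fun v => F.connectedComponentMk v = C)).card
        ≤ (Q.filter (fun v => F.connectedComponentMk v = C)).card + 1 ∧
      3 ≤ (Finset.univ.filter (fun v => F.connectedComponentMk v = C)).card := by
    intro C
    obtain ⟨m, hm3, ⟨φ⟩⟩ := hcomp C
    set SC : Finset ↥(Wᶜ : Set (Vtx n r)) :=
      Finset.univ.filter (fun v => F.connectedComponentMk v = C) with hSCdef
    have hmem_supp : ∀ v : ↥(Wᶜ : Set (Vtx n r)), v ∈ SC ↔ v ∈ C.supp := by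
      intro v
      simp [hSCdef, SimpleGraph.ConnectedComponent.mem_supp_iff]
    have hSCcard : SC.card = m := by
      have h1 : Fintype.card ↥(C.supp) = m := by
        rw [← Fintype.card_fin m]
        exact Fintype.card_congr φ.toEquiv
      rw [← h1, Fintype.card_subtype]
      apply Finset.card_bij (fun v _ => v)
      · intro v hv; simpa using (hmem_supp v).1 hv
      · intro a b _ _ hab; exact hab
      · intro b hb
        refine ⟨b, (hmem_supp b).2 (by simpa using hb), rfl⟩
    -- split SC by isRight
    have hsplit : (SC.filter (fun v => v.1.isRight)).card
        + (SC.filter (fun v => ¬ v.1.isRight)).card = SC.card :=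
      Finset.card_filter_add_card_filter_not _
    have hPfil : P.filter (fun v => F.connectedComponentMk v = C)
        = SC.filter (fun v => v.1.isRight) := by
      ext v
      simp only [hPdef, hSCdef, Finset.mem_filter, Finset.mem_univ, true_and]
      tauto
    have hQfil : Q.filter (fun v => F.connectedComponentMk v = C)
        = SC.filter (fun v => ¬ v.1.isRight) := by
      ext v
      simp only [hQdef, hSCdef, Finset.mem_filter, Finset.mem_univ, true_and]
      tauto
    -- independent set bound via the path isomorphism
    have hkey : 2 * (SC.filter (fun v => v.1.isRight)).card ≤ m + 1 := by
      set T := SC.filter (fun v => v.1.isRight) with hTdef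
      have hTsupp : ∀ v ∈ T, v ∈ C.supp := fun v hv =>
        (hmem_supp v).1 (Finset.mem_of_mem_filter _ hv)
      set f : {v // v ∈ T} → Fin m := fun v => φ ⟨v.1, hTsupp v.1 v.2⟩ with hfdef
      have hfinj : Function.Injective f := by
        intro a b hab
        have h2 : (⟨a.1, hTsupp a.1 a.2⟩ : ↥C.supp) = ⟨b.1, hTsupp b.1 b.2⟩ :=
          φ.toEquiv.injective hab
        have h3 : a.1 = b.1 := congrArg (fun x : ↥C.supp => x.1) h2
        exact Subtype.ext h3
      set I : Finset (Fin m) := T.attach.image f with hIdef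
      have hIcard : I.card = T.card := by
        rw [hIdef, Finset.card_image_of_injective _ hfinj, Finset.card_attach]
      have hIind : ∀ i ∈ I, ∀ j ∈ I, ¬ (pathGraph m).Adj i j := by
        intro i hi j hj hadj
        obtain ⟨a, _, rfl⟩ := Finset.mem_image.1 hi
        obtain ⟨b, _, rfl⟩ := Finset.mem_image.1 hj
        rw [hfdef] at hadj
        have hadj2 : (F.induce C.supp).Adj ⟨a.1, hTsupp a.1 a.2⟩ ⟨b.1, hTsupp b.1 b.2⟩ :=
          φ.map_adj_iff.1 hadj
        have hadjF : F.Adj a.1 b.1 := hadj2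
        have haP : a.1 ∈ P :=
          Finset.mem_filter.2 ⟨Finset.mem_univ _, (Finset.mem_filter.1 a.2).2⟩
        have hbP : b.1 ∈ P :=
          Finset.mem_filter.2 ⟨Finset.mem_univ _, (Finset.mem_filter.1 b.2).2⟩
        exact hPind _ haP _ hbP hadjF
      have := indep_path I hIind
      omega
    refine ⟨?_, ?_⟩
    · rw [hPfil, hQfil]; omega
    · omega
  -- summation over components
  have hfib : ∀ (R : Finset ↥(Wᶜ : Set (Vtx n r))),
      R.card = ∑ C : F.ConnectedComponent,
        (R.filter (fun v => F.connectedComponentMk v = C)).card :=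
    fun R => Finset.card_eq_sum_card_fiberwise (fun v _ => Finset.mem_univ _)
  have hPsum := hfib P
  have hQsum := hfib Q
  have hUsum := hfib Finset.univ
  set nC := Fintype.card F.ConnectedComponent with hnC
  have h1 : 2*r+5 ≤ (r+2) + nC := by
    calc 2*r+5 = P.card := hPcard.symm
      _ = ∑ C : F.ConnectedComponent,
            (P.filter (fun v => F.connectedComponentMk v = C)).card := hPsum
      _ ≤ ∑ C : F.ConnectedComponent,
            ((Q.filter (fun v => F.connectedComponentMk v = C)).card + 1) :=
          Finset.sum_le_sum (fun C _ => (hcompbound C).1)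
      _ = (∑ C : F.ConnectedComponent,
            (Q.filter (fun v => F.connectedComponentMk v = C)).card) + nC := by
          rw [Finset.sum_add_distrib, Finset.sum_const, Finset.card_univ, smul_eq_mul, mul_one]
      _ = Q.card + nC := by rw [← hQsum]
      _ = (r+2) + nC := by rw [hQcard]
  have h2 : 3 * nC ≤ 3*r+7 := by
    have := Finset.card_nsmul_le_sum Finset.univ
      (fun C : F.ConnectedComponent =>
        (Finset.univ.filter (fun v => F.connectedComponentMk v = C)).card) 3
      (fun C _ => (hcompbound C).2)
    rw [← hUsum, Finset.card_univ, Finset.card_univ, hVcard, smul_eq_mul] at this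
    omega
  omega
end Part3

/-- Remark 3: sharpness of the toughness bound in Theorem 7. -/
theorem stmt8 (n r : ℕ)
    (G : SimpleGraph (Fin (n + r + 2) ⊕ (Fin (2 * r + 3) ⊕ Fin 2)))
    (hG : G = graphJoin (⊤ : SimpleGraph (Fin (n + r + 2)))
      (disjUnion (⊥ : SimpleGraph (Fin (2 * r + 3))) (⊤ : SimpleGraph (Fin 2)))) :
    IsKConnected G (n + r + 2) ∧
    toughness G = ((n : ENNReal) + r + 2) / (2 * ((r : ENNReal) + 2)) ∧
    ¬ PathFactorCriticalAvoidable G 3 n := by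
  subst hG
  exact ⟨isKConnected_Gr, toughness_Gr, not_avoidable⟩
end Helpers
end
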